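/- arXiv:2402.16231 — 6 statements merged into one kernel-verified Lean document; each statement's English description precedes it below -/
import Mathlib

section
/- Let L be a field whose characteristic is neither 2 nor 3, and let M be an L-linear representation of SL₂(ℤ) on which the matrix −I acts as the identity. Let S = [[0,1],[-1,0]], U = [[0,1],[-1,1]] ∈ SL₂(ℤ), and let s, u denote the linear automorphisms of M given by the actions of S and U (so s² = 1 and u³ = 1 on M). Set A = {v ∈ M : v + u v + u² v = 0}, let B ⊆ A be the image of {v ∈ M : s v = v} under (u − 1), and set H¹ = A/B. Let H¹_c = {f ∈ M* : f∘(1 + u + u²) = 0 and f∘s = −f}, where M* is the full linear dual of M. Then for every f ∈ H¹_c the linear functional v ↦ f((1 − u²)v) on A vanishes on B, and the induced map H¹_c → (A/B)* is an L-linear isomorphism. -/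
/-- `S = [[0,1],[-1,0]] ∈ SL₂(ℤ)`. -/
def SL2ZS : Matrix.SpecialLinearGroup (Fin 2) ℤ :=
  ⟨!![0, 1; -1, 0], by norm_num [Matrix.det_fin_two_of]⟩

/-- `U = [[0,1],[-1,1]] ∈ SL₂(ℤ)`. -/
def SL2ZU : Matrix.SpecialLinearGroup (Fin 2) ℤ :=
  ⟨!![0, 1; -1, 1], by norm_num [Matrix.det_fin_two_of]⟩

/-- `−I = [[-1,0],[0,-1]] ∈ SL₂(ℤ)`. -/
def SL2ZnegI : Matrix.SpecialLinearGroup (Fin 2) ℤ :=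
  ⟨!![-1, 0; 0, -1], by norm_num [Matrix.det_fin_two_of]⟩

variable {L : Type} [Field L] {M : Type} [AddCommGroup M] [Module L M]

/-- `A = {v ∈ M : v + u v + u² v = 0}`, where `u` is the action of `U`. -/
noncomputable def kerOnePlusUPlusUSq
    (ρ : Representation L (Matrix.SpecialLinearGroup (Fin 2) ℤ) M) : Submodule L M :=
  LinearMap.ker ((1 : Module.End L M) + ρ SL2ZU + ρ SL2ZU * ρ SL2ZU)

/-- `B = (u − 1)(M^{s=1})`, the image under `u − 1` of the `s`-fixed vectors. -/
noncomputable def imageUSubOneOfSFixed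
    (ρ : Representation L (Matrix.SpecialLinearGroup (Fin 2) ℤ) M) : Submodule L M :=
  Submodule.map (ρ SL2ZU - 1) (LinearMap.ker (ρ SL2ZS - (1 : Module.End L M)))

/-- `B` viewed inside `A`. -/
noncomputable def imageUSubOneOfSFixed'
    (ρ : Representation L (Matrix.SpecialLinearGroup (Fin 2) ℤ) M) :
    Submodule L (kerOnePlusUPlusUSq ρ) :=
  (imageUSubOneOfSFixed ρ).comap (kerOnePlusUPlusUSq ρ).subtype

/-- `H¹_c = {f ∈ M* : f∘(1 + u + u²) = 0 and f∘(s + 1) = 0}`. -/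
noncomputable def H1cDual
    (ρ : Representation L (Matrix.SpecialLinearGroup (Fin 2) ℤ) M) :
    Submodule L (Module.Dual L M) :=
  LinearMap.ker (((1 : Module.End L M) + ρ SL2ZU + ρ SL2ZU * ρ SL2ZU).dualMap) ⊓
    LinearMap.ker ((ρ SL2ZS + (1 : Module.End L M)).dualMap)

/-- Auxiliary: the pairing map `Φ`, given the vanishing condition. -/
noncomputable def h1cPhiAux
    (ρ : Representation L (Matrix.SpecialLinearGroup (Fin 2) ℤ) M)
    (hker : ∀ f : H1cDual ρ, imageUSubOneOfSFixed' ρ ≤ LinearMap.ker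
      (((f : Module.Dual L M) ∘ₗ ((1:Module.End L M) - ρ SL2ZU * ρ SL2ZU)) ∘ₗ
        (kerOnePlusUPlusUSq ρ).subtype)) :
    H1cDual ρ →ₗ[L] Module.Dual L (kerOnePlusUPlusUSq ρ ⧸ imageUSubOneOfSFixed' ρ) where
  toFun f := Submodule.liftQ (imageUSubOneOfSFixed' ρ)
    (((f : Module.Dual L M) ∘ₗ ((1:Module.End L M) - ρ SL2ZU * ρ SL2ZU)) ∘ₗ
      (kerOnePlusUPlusUSq ρ).subtype) (hker f)
  map_add' f g := by
    apply Submodule.linearMap_qext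
    ext a
    simp [Submodule.liftQ_apply]
  map_smul' c f := by
    apply Submodule.linearMap_qext
    ext a
    simp [Submodule.liftQ_apply]

theorem h1cPhiAux_apply
    (ρ : Representation L (Matrix.SpecialLinearGroup (Fin 2) ℤ) M)
    (hker : ∀ f : H1cDual ρ, imageUSubOneOfSFixed' ρ ≤ LinearMap.ker
      (((f : Module.Dual L M) ∘ₗ ((1:Module.End L M) - ρ SL2ZU * ρ SL2ZU)) ∘ₗ
        (kerOnePlusUPlusUSq ρ).subtype))
    (f : H1cDual ρ) (a : kerOnePlusUPlusUSq ρ) :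
    h1cPhiAux ρ hker f (Submodule.Quotient.mk a)
      = (f : Module.Dual L M) (((1 : Module.End L M) - ρ SL2ZU * ρ SL2ZU) (a : M)) := by
  simp [h1cPhiAux, Submodule.liftQ_apply]

set_option maxHeartbeats 1000000 in
/-- for a representation of `SL₂(ℤ)` over a field of characteristic `≠ 2, 3`
on which `−I` acts trivially, the pairing `f ↦ (v ↦ f((1 − u²)v))` identifies
`H¹_c = (M*)^{1+U+U²=0} ∩ (M*)^{1+S=0}` with the dual of `H¹ = A/B`. -/
theorem h1c_dual_iso_dual_h1
    (h2 : (2 : L) ≠ 0) (h3 : (3 : L) ≠ 0)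
    (ρ : Representation L (Matrix.SpecialLinearGroup (Fin 2) ℤ) M)
    (hI : ρ SL2ZnegI = 1) :
    (∀ f ∈ H1cDual ρ, ∀ v ∈ imageUSubOneOfSFixed ρ,
      f (((1 : Module.End L M) - ρ SL2ZU * ρ SL2ZU) v) = 0) ∧
    ∃ Φ : H1cDual ρ →ₗ[L]
        Module.Dual L (kerOnePlusUPlusUSq ρ ⧸ imageUSubOneOfSFixed' ρ),
      (∀ (f : H1cDual ρ) (a : kerOnePlusUPlusUSq ρ),
        Φ f (Submodule.Quotient.mk a)
          = (f : Module.Dual L M) (((1 : Module.End L M) - ρ SL2ZU * ρ SL2ZU) (a : M))) ∧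
      Function.Bijective Φ := by
  classical
  have hUU : SL2ZU * SL2ZU * SL2ZU = SL2ZnegI := by
    ext i j
    fin_cases i <;> fin_cases j <;>
      simp [SL2ZU, SL2ZnegI, Matrix.mul_apply, Fin.sum_univ_two] <;> rfl
  have hSS : SL2ZS * SL2ZS = SL2ZnegI := by
    ext i j
    fin_cases i <;> fin_cases j <;>
      simp [SL2ZS, SL2ZnegI, Matrix.mul_apply, Fin.sum_univ_two] <;> rfl
  set u : Module.End L M := ρ SL2ZU with hu
  set s : Module.End L M := ρ SL2ZS with hs
  have hU3 : u * u * u = 1 := by rw [hu, ← map_mul, ← map_mul, hUU, hI]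
  have hS2 : s * s = 1 := by rw [hs, ← map_mul, hSS, hI]
  set N : Module.End L M := 1 + u + u * u with hN
  have hNu : N * u = N := by
    have h : N * u = u + u * u + u * u * u := by rw [hN]; noncomm_ring
    rw [h, hU3, hN]; abel
  have hNN : N * N = N + N + N := by
    have h : N * N = N * 1 + N * u + (N * u) * u := by rw [hN]; noncomm_ring
    rw [mul_one, hNu] at h
    rw [h, hNu]
  have hN1u : N * (1 - u) = 0 := by rw [mul_sub, mul_one, hNu, sub_self]
  have huu_u1 : (1 - u*u) * (u - 1) = N - (1+1+1) := by
    have h : (1 - u*u) * (u - 1) = (N - (1+1+1)) - (u*u*u - 1) := by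
      rw [hN]; noncomm_ring
    rw [h, hU3, sub_self, sub_zero]
  have h1u_1uu : (1 - u) * (1 - u*u) = (1+1+1) - N := by
    have h : (1 - u) * (1 - u*u) = (((1:Module.End L M)+1+1) - N) + (u*u*u - 1) := by
      rw [hN]; noncomm_ring
    rw [h, hU3, sub_self, add_zero]
  have hsplus : (s - 1) * (s + 1) = 0 := by
    have h : (s - 1) * (s + 1) = s*s - 1 := by noncomm_ring
    rw [h, hS2, sub_self]
  have h3smul : ∀ x : M, (3:L)⁻¹ • (x + x + x) = x := by
    intro x
    have h : x + x + x = (3:L) • x := by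
      rw [show (3:L) = 1+1+1 by norm_num, add_smul, add_smul, one_smul]
    rw [h, smul_smul, inv_mul_cancel₀ h3, one_smul]
  have memA : ∀ x : M, x ∈ kerOnePlusUPlusUSq ρ ↔ N x = 0 := by
    intro x
    simp only [kerOnePlusUPlusUSq, LinearMap.mem_ker, hN, hu]
  have memB : ∀ x : M, x ∈ imageUSubOneOfSFixed ρ ↔
      ∃ w : M, (s - 1) w = 0 ∧ (u - 1) w = x := by
    intro x
    simp only [imageUSubOneOfSFixed, Submodule.mem_map, LinearMap.mem_ker, hu, hs]
  have memC : ∀ f : Module.Dual L M, f ∈ H1cDual ρ ↔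
      (∀ v, f (N v) = 0) ∧ (∀ v, f (s v + v) = 0) := by
    intro f
    simp only [H1cDual, Submodule.mem_inf, LinearMap.mem_ker, hN, hu, hs,
      LinearMap.ext_iff, LinearMap.dualMap_apply, LinearMap.comp_apply,
      LinearMap.zero_apply, LinearMap.add_apply, Module.End.one_apply]
  have key1 : ∀ f ∈ H1cDual ρ, ∀ v ∈ imageUSubOneOfSFixed ρ,
      f (((1 : Module.End L M) - u * u) v) = 0 := by
    intro f hf v hv
    obtain ⟨hf1, hf2⟩ := (memC f).1 hf
    obtain ⟨w, hw1, hw2⟩ := (memB v).1 hv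
    have hsw : s w = w := by
      have h := hw1
      rw [LinearMap.sub_apply, Module.End.one_apply, sub_eq_zero] at h
      exact h
    have hfw : f w = 0 := by
      have h := hf2 w
      rw [hsw, map_add] at h
      have h' : (2:L) * f w = 0 := by rw [two_mul]; exact h
      exact (mul_eq_zero.mp h').resolve_left h2
    have hv' : ((1:Module.End L M) - u*u) v = N w - (w + w + w) := by
      rw [← hw2, ← Module.End.mul_apply, huu_u1]
      simp [LinearMap.sub_apply, LinearMap.add_apply, Module.End.one_apply]
    rw [hv', map_sub, hf1 w]
    simp [map_add, hfw]
  refine ⟨key1, ?_⟩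
  -- the projection M → A
  have hP0A : ∀ v : M, ((3:L)⁻¹ • ((1:Module.End L M) - u)) v ∈ kerOnePlusUPlusUSq ρ := by
    intro v
    rw [memA]
    have h : N (((3:L)⁻¹ • ((1:Module.End L M) - u)) v) = (3:L)⁻¹ • ((N * (1 - u)) v) := by
      rw [LinearMap.smul_apply, map_smul, Module.End.mul_apply]
    rw [h, hN1u]
    simp
  set P : M →ₗ[L] kerOnePlusUPlusUSq ρ :=
    LinearMap.codRestrict (kerOnePlusUPlusUSq ρ) ((3:L)⁻¹ • ((1:Module.End L M) - u)) hP0A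
    with hP
  have hPapp : ∀ v : M, (P v : M) = (3:L)⁻¹ • (v - u v) := by
    intro v
    rw [hP, LinearMap.codRestrict_apply, LinearMap.smul_apply, LinearMap.sub_apply,
      Module.End.one_apply]
  have hPrec : ∀ a : kerOnePlusUPlusUSq ρ, P (((1:Module.End L M) - u*u) (a : M)) = a := by
    intro a
    apply Subtype.ext
    rw [hPapp]
    have h1 : ((1:Module.End L M) - u*u) (a:M) - u (((1:Module.End L M) - u*u) (a:M))
        = (((1:Module.End L M) - u) * ((1:Module.End L M) - u*u)) (a:M) := by
      simp [Module.End.mul_apply, LinearMap.sub_apply, Module.End.one_apply]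
    rw [h1, h1u_1uu, LinearMap.sub_apply, (memA _).1 a.2, sub_zero]
    have h2' : ((1:Module.End L M)+1+1) (a:M) = (a:M) + (a:M) + (a:M) := by
      simp [LinearMap.add_apply, Module.End.one_apply]
    rw [h2', h3smul]
  have hker : ∀ f : H1cDual ρ, imageUSubOneOfSFixed' ρ ≤ LinearMap.ker
      (((f : Module.Dual L M) ∘ₗ ((1:Module.End L M) - u*u)) ∘ₗ
        (kerOnePlusUPlusUSq ρ).subtype) := by
    intro f a ha
    rw [LinearMap.mem_ker, LinearMap.comp_apply, LinearMap.comp_apply]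
    exact key1 (f : Module.Dual L M) f.2 (a : M)
      (by simpa [imageUSubOneOfSFixed', Submodule.mem_comap] using ha)
  have hprop : ∀ (f : H1cDual ρ) (a : kerOnePlusUPlusUSq ρ),
      h1cPhiAux ρ hker f (Submodule.Quotient.mk a)
        = (f : Module.Dual L M) (((1 : Module.End L M) - u * u) (a : M)) := by
    intro f a
    exact h1cPhiAux_apply ρ hker f a
  refine ⟨h1cPhiAux ρ hker, hprop, ?_, ?_⟩
  · -- injective
    have hzero : ∀ f : H1cDual ρ, h1cPhiAux ρ hker f = 0 → f = 0 := by
      intro f hΦ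
      obtain ⟨hf1, hf2⟩ := (memC (f : Module.Dual L M)).1 f.2
      apply Subtype.ext
      rw [ZeroMemClass.coe_zero]
      apply LinearMap.ext
      intro v
      rw [LinearMap.zero_apply]
      have haA : v - (3:L)⁻¹ • N v ∈ kerOnePlusUPlusUSq ρ := by
        rw [memA, map_sub, map_smul]
        have h : N (N v) = N v + N v + N v := by
          rw [← Module.End.mul_apply, hNN]
          simp [LinearMap.add_apply]
        rw [h, h3smul, sub_self]
      set a : M := v - (3:L)⁻¹ • N v with ha
      have hNa : N a = 0 := (memA a).1 haA
      have hm : ((1:Module.End L M) - u*u) ((P a : M)) = a := by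
        rw [hPapp, map_smul]
        have e1 : a - u a = ((1:Module.End L M) - u) a := by
          simp [LinearMap.sub_apply, Module.End.one_apply]
        rw [e1, ← Module.End.mul_apply]
        have e2 : ((1:Module.End L M) - u*u) * ((1:Module.End L M) - u) = (1+1+1) - N := by
          rw [← h1u_1uu]; noncomm_ring
        rw [e2]
        have e3 : (((1:Module.End L M)+1+1) - N) a = a + a + a - N a := by
          simp [LinearMap.sub_apply, LinearMap.add_apply, Module.End.one_apply]
        rw [e3, hNa, sub_zero, h3smul]
      have hfa : (f : Module.Dual L M) a = 0 := by
        have h := LinearMap.congr_fun hΦ (Submodule.Quotient.mk (P a))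
        rw [hprop, LinearMap.zero_apply, hm] at h
        exact h
      have hv : v = a + (3:L)⁻¹ • N v := by rw [ha]; abel
      calc (f : Module.Dual L M) v
          = (f : Module.Dual L M) (a + (3:L)⁻¹ • N v) := by rw [← hv]
        _ = (f : Module.Dual L M) a + (3:L)⁻¹ • (f : Module.Dual L M) (N v) := by
            rw [map_add, map_smul]
        _ = 0 := by rw [hfa, hf1 v, smul_zero, add_zero]
    intro f g hfg
    have hm : h1cPhiAux ρ hker (f - g) = h1cPhiAux ρ hker f - h1cPhiAux ρ hker g :=
      map_sub (h1cPhiAux ρ hker) f g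
    have h := hzero (f - g) (by rw [hm, hfg, sub_self])
    exact sub_eq_zero.mp h
  · -- surjective
    intro ψ
    set f0 : Module.Dual L M := ψ ∘ₗ ((imageUSubOneOfSFixed' ρ).mkQ ∘ₗ P) with hf0
    have hf0mem : f0 ∈ H1cDual ρ := by
      rw [memC]
      constructor
      · intro v
        have hP0 : P (N v) = 0 := by
          apply Subtype.ext
          rw [hPapp]
          have h : N v - u (N v) = (((1:Module.End L M) - u) * N) v := by
            simp [Module.End.mul_apply, LinearMap.sub_apply, Module.End.one_apply]
          have h1uN : ((1:Module.End L M) - u) * N = 0 := by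
            have hh : ((1:Module.End L M) - u) * N = 1 - u * u * u := by
              rw [hN]; noncomm_ring
            rw [hh, hU3, sub_self]
          rw [h, h1uN]
          simp
        rw [hf0]
        simp [LinearMap.comp_apply, hP0]
      · intro v
        have hPmem : P (s v + v) ∈ imageUSubOneOfSFixed' ρ := by
          rw [imageUSubOneOfSFixed', Submodule.mem_comap]
          have hco : (kerOnePlusUPlusUSq ρ).subtype (P (s v + v)) = (P (s v + v) : M) := rfl
          rw [hco, hPapp, memB]
          refine ⟨(3:L)⁻¹ • (-(s v + v)), ?_, ?_⟩
          · rw [map_smul, map_neg]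
            have h : (s - 1) (s v + v) = ((s - 1) * (s + 1)) v := by
              simp [Module.End.mul_apply, LinearMap.sub_apply, LinearMap.add_apply,
                Module.End.one_apply]
            rw [h, hsplus]
            simp
          · rw [map_smul, map_neg]
            congr 1
            rw [LinearMap.sub_apply, Module.End.one_apply, neg_sub]
        rw [hf0]
        simp only [LinearMap.comp_apply, Submodule.mkQ_apply]
        rw [(Submodule.Quotient.mk_eq_zero _).2 hPmem]
        simp
    refine ⟨⟨f0, hf0mem⟩, ?_⟩
    apply Submodule.linearMap_qext
    apply LinearMap.ext
    intro a
    simp only [LinearMap.comp_apply, Submodule.mkQ_apply]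
    rw [hprop ⟨f0, hf0mem⟩ a]
    show f0 (((1:Module.End L M) - u*u) (a : M)) = ψ (Submodule.Quotient.mk a)
    rw [hf0]
    simp only [LinearMap.comp_apply, Submodule.mkQ_apply, hPrec a]
end

section
/- Let Ẑ denote the topological ring ∏_ℓ ℤ_ℓ, the product over all prime numbers ℓ of the rings of ℓ-adic integers, with the product topology, and let p be a fixed prime. For every continuous function f : Ẑ → ℚ_p there exists a continuous function g : Ẑ → ℚ_p such that g(x) − g(x − 1) = f(x) for all x ∈ Ẑ (here 1 is the multiplicative identity of Ẑ). Equivalently, H¹(ℤ, C(Ẑ, ℚ_p)) = 0, where ℤ acts on continuous functions by translation. -/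
open scoped ContinuousMap

instance (q : Nat.Primes) : Fact (Nat.Prime (q : ℕ)) := ⟨q.2⟩

/-- `Ẑ = ∏_ℓ ℤ_ℓ`, the product over all primes of the `ℓ`-adic integers, with the
product topology. -/
abbrev ZhatProd : Type := ∀ q : Nat.Primes, ℤ_[(q : ℕ)]

open Filter Topology Set
open scoped Uniformity

namespace ZhatPrim

lemma norm_natCast_le (P : ℕ) [Fact P.Prime] (N : ℕ) :
    ‖(N : ℤ_[P])‖ ≤ (P : ℝ) ^ (-(N.factorization P : ℤ)) := by
  have h : ((P : ℤ)) ^ (N.factorization P) ∣ (N : ℤ) := by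
    exact_mod_cast Int.natCast_dvd_natCast.mpr (Nat.ordProj_dvd N P)
  have h2 := (PadicInt.norm_int_le_pow_iff_dvd (k := (N : ℤ)) (n := N.factorization P)).mpr h
  simpa using h2

lemma dvd_of_norm_le {P : ℕ} [Fact P.Prime] {N : ℕ} (hN : N ≠ 0) {x : ℤ_[P]}
    (hx : ‖x‖ ≤ (P : ℝ) ^ (-(N.factorization P : ℤ))) : (N : ℤ_[P]) ∣ x := by
  set v := N.factorization P with hv
  have hsp : x ∈ Ideal.span {((P : ℤ_[P]) ^ v)} :=
    (PadicInt.norm_le_pow_iff_mem_span_pow x v).mp hx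
  rw [Ideal.mem_span_singleton] at hsp
  obtain ⟨c, hc⟩ := hsp
  have hMunit : IsUnit ((N / P ^ v : ℕ) : ℤ_[P]) := by
    rw [PadicInt.isUnit_iff]
    refine le_antisymm (PadicInt.norm_le_one _) (not_lt.mp ?_)
    have : ((N / P ^ v : ℕ) : ℤ_[P]) = (((N / P ^ v : ℕ) : ℤ) : ℤ_[P]) := by norm_cast
    rw [this, PadicInt.norm_int_lt_one_iff_dvd]
    intro hdvd
    exact Nat.not_dvd_ordCompl (Fact.out) hN (Int.natCast_dvd_natCast.mp hdvd)
  have hfac : (N : ℤ_[P]) = (P : ℤ_[P]) ^ v * ((N / P ^ v : ℕ) : ℤ_[P]) := by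
    rw [← Nat.cast_pow, ← Nat.cast_mul, Nat.ordProj_mul_ordCompl_eq_self N P]
  obtain ⟨u, hu⟩ := hMunit
  refine ⟨(↑u⁻¹ : ℤ_[P]) * c, ?_⟩
  rw [hfac, ← hu, hc]
  have h1 : (↑u : ℤ_[P]) * ↑u⁻¹ = 1 := u.mul_inv
  calc (P : ℤ_[P]) ^ v * c = (P : ℤ_[P]) ^ v * ((↑u * ↑u⁻¹) * c) := by rw [h1]; ring
    _ = (P : ℤ_[P]) ^ v * ↑u * (↑u⁻¹ * c) := by ring

/-- `N·Ẑ`. -/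
def modSet (N : ℕ) : Set ZhatProd := {x | ∃ z : ZhatProd, x = (N : ZhatProd) * z}

lemma mem_modSet_iff {N : ℕ} (hN : N ≠ 0) {x : ZhatProd} :
    x ∈ modSet N ↔ ∀ q : Nat.Primes, ‖x q‖ ≤ ((q : ℕ) : ℝ) ^ (-(N.factorization (q : ℕ) : ℤ)) := by
  constructor
  · rintro ⟨z, rfl⟩ q
    have h0 : ((N : ZhatProd) * z) q = (N : ℤ_[(q : ℕ)]) * z q := rfl
    rw [h0, norm_mul]
    calc ‖(N : ℤ_[(q:ℕ)])‖ * ‖z q‖ ≤ ‖(N : ℤ_[(q:ℕ)])‖ * 1 :=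
          mul_le_mul_of_nonneg_left (PadicInt.norm_le_one _) (norm_nonneg _)
      _ ≤ _ := by rw [mul_one]; exact norm_natCast_le _ N
  · intro h
    have hd : ∀ q : Nat.Primes, (N : ℤ_[(q : ℕ)]) ∣ x q := fun q => dvd_of_norm_le hN (h q)
    choose z hz using hd
    exact ⟨z, funext fun q => by rw [hz q]; rfl⟩

lemma modSet_sub {N : ℕ} {x y : ZhatProd} (hx : x ∈ modSet N) (hy : y ∈ modSet N) :
    x - y ∈ modSet N := by
  obtain ⟨a, rfl⟩ := hx; obtain ⟨b, rfl⟩ := hy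
  exact ⟨a - b, by ring⟩

lemma zero_mem_modSet (N : ℕ) : (0 : ZhatProd) ∈ modSet N := ⟨0, by ring⟩

/-- `N·Ẑ` is a neighbourhood of `0`. -/
lemma modSet_mem_nhds {N : ℕ} (hN : N ≠ 0) : modSet N ∈ 𝓝 (0 : ZhatProd) := by
  set s : Set Nat.Primes := {q : Nat.Primes | (q : ℕ) ∣ N} with hs
  have hsfin : s.Finite := by
    have : s ⊆ (fun q : Nat.Primes => (q : ℕ)) ⁻¹' {d | d ∣ N} := fun q hq => hq
    refine Set.Finite.preimage (fun a _ b _ h => Nat.Primes.coe_nat_injective h) ?_ |>.subset this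
    exact (Set.finite_Iic N).subset fun d hd => Nat.le_of_dvd (Nat.pos_of_ne_zero hN) hd
  have hsub : (⋂ q ∈ s, {x : ZhatProd | ‖x q‖ < ((q:ℕ):ℝ) ^ (1 - (N.factorization (q:ℕ) : ℤ))})
      ⊆ modSet N := by
    intro x hx
    rw [mem_modSet_iff hN]
    intro q
    by_cases hq : (q : ℕ) ∣ N
    · have hxq := Set.mem_iInter₂.mp hx q hq
      have := (PadicInt.norm_le_pow_iff_norm_lt_pow_add_one (x q)
        (-(N.factorization (q:ℕ) : ℤ))).mpr (by rw [show (-(N.factorization (q:ℕ):ℤ) + 1) = 1 - (N.factorization (q:ℕ):ℤ) by ring]; exact hxq)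
      exact this
    · have : N.factorization (q : ℕ) = 0 := Nat.factorization_eq_zero_of_not_dvd hq
      rw [this]
      simpa using PadicInt.norm_le_one (x q)
  refine Filter.mem_of_superset ?_ hsub
  refine (Filter.biInter_mem hsfin).mpr fun q hq => ?_
  have hopen : IsOpen {x : ZhatProd | ‖x q‖ < ((q:ℕ):ℝ) ^ (1 - (N.factorization (q:ℕ) : ℤ))} := by
    have : Continuous fun x : ZhatProd => ‖x q‖ := (continuous_apply q).norm
    exact isOpen_lt this continuous_const
  refine hopen.mem_nhds ?_
  simp only [Set.mem_setOf_eq, Pi.zero_apply, norm_zero]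
  exact zpow_pos (by exact_mod_cast q.2.pos) _


/-- Every neighbourhood of `0` in `Ẑ` contains some `N·Ẑ`. -/
lemma exists_modSet_subset {W : Set ZhatProd} (hW : W ∈ 𝓝 (0 : ZhatProd)) :
    ∃ N : ℕ, N ≠ 0 ∧ modSet N ⊆ W := by
  rw [nhds_pi, Filter.mem_pi] at hW
  obtain ⟨I, hIfin, t, ht, hsub⟩ := hW
  -- for each q in I choose an exponent
  have hv : ∀ q : Nat.Primes, ∃ v : ℕ, {y : ℤ_[(q:ℕ)] | ‖y‖ ≤ ((q:ℕ):ℝ) ^ (-(v:ℤ))} ⊆ t q := by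
    intro q
    have h0 : t q ∈ 𝓝 (0 : ℤ_[(q:ℕ)]) := by simpa using ht q
    rw [Metric.mem_nhds_iff] at h0
    obtain ⟨ε, hε, hball⟩ := h0
    have hq1 : (1 : ℝ) < (q : ℕ) := by exact_mod_cast q.2.one_lt
    obtain ⟨v, hvlt⟩ : ∃ v : ℕ, ((q:ℕ):ℝ)⁻¹ ^ v < ε := by
      refine exists_pow_lt_of_lt_one hε ?_
      rw [inv_lt_one_iff₀]; right; exact hq1
    refine ⟨v, fun y hy => hball ?_⟩
    simp only [Metric.mem_ball, dist_zero_right]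
    calc ‖y‖ ≤ ((q:ℕ):ℝ) ^ (-(v:ℤ)) := hy
      _ = ((q:ℕ):ℝ)⁻¹ ^ v := by rw [zpow_neg, ← zpow_natCast, inv_zpow]
      _ < ε := hvlt
  choose v hvsub using hv
  refine ⟨∏ q ∈ hIfin.toFinset, (q : ℕ) ^ (v q), Finset.prod_ne_zero_iff.mpr
    (fun q _ => pow_ne_zero _ q.2.pos.ne'), ?_⟩
  set N := ∏ q ∈ hIfin.toFinset, (q : ℕ) ^ (v q) with hNdef
  intro x hx
  apply hsub
  intro q hqI
  have hq' : q ∈ hIfin.toFinset := hIfin.mem_toFinset.mpr hqI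
  refine hvsub q ?_
  have hxq := (mem_modSet_iff (N := N) (Finset.prod_ne_zero_iff.mpr
    (fun q _ => pow_ne_zero _ q.2.pos.ne')) |>.mp hx) q
  refine le_trans hxq ?_
  have hdvd : (q : ℕ) ^ (v q) ∣ N := Finset.dvd_prod_of_mem _ hq'
  have hle : (v q : ℤ) ≤ (N.factorization (q:ℕ) : ℤ) := by
    exact_mod_cast (Nat.Prime.pow_dvd_iff_le_factorization q.2 (Finset.prod_ne_zero_iff.mpr
      (fun q _ => pow_ne_zero _ q.2.pos.ne'))).mp hdvd
  have hq1 : (1 : ℝ) ≤ ((q:ℕ):ℝ) := by exact_mod_cast q.2.one_lt.le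
  exact zpow_le_zpow_right₀ hq1 (by omega)

/-- Chinese remainder over a finite set of primes. -/
lemma crt (s : Finset Nat.Primes) (m : Nat.Primes → ℕ) (r : Nat.Primes → ℤ) :
    ∃ n : ℤ, ∀ q ∈ s, (((q : ℕ) : ℤ) ^ (m q)) ∣ (n - r q) := by
  induction s using Finset.cons_induction_on with
  | empty => exact ⟨0, fun q hq => absurd hq (Finset.notMem_empty q)⟩
  | cons _ _ hq0 ih =>
    rename_i q0 s
    obtain ⟨n₁, hn₁⟩ := ih
    set M : ℤ := ∏ q ∈ s, ((q : ℕ) : ℤ) ^ (m q) with hM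
    set L : ℤ := ((q0 : ℕ) : ℤ) ^ (m q0) with hL
    have hco : IsCoprime M L := by
      rw [hM, hL]
      refine IsCoprime.prod_left fun q hq => ?_
      have hne : (q : ℕ) ≠ (q0 : ℕ) := by
        intro h
        exact hq0 (by rwa [Nat.Primes.coe_nat_injective h] at hq)
      have h2 : Nat.Coprime ((q : ℕ) ^ m q) ((q0 : ℕ) ^ m q0) :=
        Nat.Coprime.pow _ _ ((Nat.coprime_primes q.2 q0.2).mpr hne)
      exact_mod_cast Nat.isCoprime_iff_coprime.mpr h2
    obtain ⟨a, b, hab⟩ := hco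
    have hz : a * M + b * L - 1 = 0 := by rw [hab]; ring
    refine ⟨r q0 * a * M + n₁ * b * L, fun q hq => ?_⟩
    rcases Finset.mem_cons.mp hq with heq | hqs
    · have he : r q0 * a * M + n₁ * b * L - r q
          = (n₁ - r q0) * b * L + r q0 * (a * M + b * L - 1) := by rw [heq]; ring
      rw [he, hz, heq]
      rw [mul_zero, add_zero]; exact dvd_mul_left _ _
    · have he : r q0 * a * M + n₁ * b * L - r q
          = (n₁ - r q) + ((r q0 - n₁) * a * M + n₁ * (a * M + b * L - 1)) := by ring
      have hdM : (((q : ℕ) : ℤ) ^ (m q)) ∣ M := Finset.dvd_prod_of_mem _ hqs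
      rw [he, hz]
      simpa using dvd_add (hn₁ q hqs) (hdM.mul_left ((r q0 - n₁) * a))

/-- `ℤ` surjects onto `Ẑ/NẐ`. -/
lemma exists_int_approx (x : ZhatProd) {N : ℕ} (hN : N ≠ 0) :
    ∃ n : ℤ, (n : ZhatProd) - x ∈ modSet N := by
  classical
  set s : Finset Nat.Primes :=
    N.primeFactors.attach.image
      (fun t => (⟨t.1, Nat.prime_of_mem_primeFactors t.2⟩ : Nat.Primes)) with hs
  have hmem : ∀ q : Nat.Primes, (q : ℕ) ∣ N → q ∈ s := by
    intro q hq
    refine Finset.mem_image.mpr ⟨⟨(q : ℕ), Nat.mem_primeFactors.mpr ⟨q.2, hq, hN⟩⟩,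
      Finset.mem_attach _ _, rfl⟩
  set m : Nat.Primes → ℕ := fun q => N.factorization (q : ℕ) with hm
  set r : Nat.Primes → ℤ := fun q => ((x q).appr (m q) : ℤ) with hr
  obtain ⟨n, hn⟩ := crt s m r
  refine ⟨n, (mem_modSet_iff hN).mpr fun q => ?_⟩
  by_cases hq : (q : ℕ) ∣ N
  · have h1 : ‖((n : ℤ_[(q:ℕ)]) - ((r q : ℤ) : ℤ_[(q:ℕ)]))‖ ≤ ((q:ℕ):ℝ) ^ (-(m q : ℤ)) := by
      have := (PadicInt.norm_int_le_pow_iff_dvd (k := n - r q) (n := m q)).mpr (hn q (hmem q hq))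
      rw [show (((n - r q : ℤ)) : ℤ_[(q:ℕ)]) = (n : ℤ_[(q:ℕ)]) - ((r q : ℤ) : ℤ_[(q:ℕ)]) by push_cast; ring] at this
      exact this
    have h2 : ‖(((r q : ℤ) : ℤ_[(q:ℕ)]) - x q)‖ ≤ ((q:ℕ):ℝ) ^ (-(m q : ℤ)) := by
      have hspec := PadicInt.appr_spec (m q) (x q)
      rw [← PadicInt.norm_le_pow_iff_mem_span_pow] at hspec
      rw [hr]
      rw [show (((((x q).appr (m q) : ℕ) : ℤ)) : ℤ_[(q:ℕ)]) = (((x q).appr (m q) : ℕ) : ℤ_[(q:ℕ)]) by push_cast; ring]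
      rw [← norm_neg]
      simpa [neg_sub] using hspec
    have hco : ((n : ZhatProd) - x) q = ((n : ℤ_[(q:ℕ)]) - ((r q : ℤ) : ℤ_[(q:ℕ)]))
        + (((r q : ℤ) : ℤ_[(q:ℕ)]) - x q) := by
      show (n : ℤ_[(q:ℕ)]) - x q = _
      ring
    rw [hco]
    exact le_trans (PadicInt.nonarchimedean _ _) (max_le h1 h2)
  · have h0 : N.factorization (q : ℕ) = 0 := Nat.factorization_eq_zero_of_not_dvd hq
    rw [h0]
    simpa using PadicInt.norm_le_one _
/-- `ℤ` is dense in `Ẑ`. -/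
lemma denseRange_intCast : DenseRange (fun n : ℤ => (n : ZhatProd)) := by
  rw [denseRange_iff_closure_range, Set.eq_univ_iff_forall]
  intro x
  rw [mem_closure_iff_nhds]
  intro W hW
  have hcont : Continuous fun y : ZhatProd => x + y := by continuity
  have hpre : (fun y : ZhatProd => x + y) ⁻¹' W ∈ 𝓝 (0 : ZhatProd) := by
    apply hcont.continuousAt.preimage_mem_nhds
    simpa using hW
  obtain ⟨N, hN, hsub⟩ := exists_modSet_subset hpre
  obtain ⟨n, hn⟩ := exists_int_approx x hN
  refine ⟨(n : ZhatProd), ?_, Set.mem_range_self n⟩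
  have := hsub hn
  simpa using this

open scoped Uniformity
variable {p : ℕ} [Fact p.Prime]

/-- Uniform continuity of `f` in terms of moduli. -/
lemma unif_cont (f : C(ZhatProd, ℚ_[p])) {ε : ℝ} (hε : 0 < ε) :
    ∃ N : ℕ, N ≠ 0 ∧ ∀ x y : ZhatProd, y - x ∈ modSet N → ‖f y - f x‖ ≤ ε := by
  have hUC : UniformContinuous (f : ZhatProd → ℚ_[p]) :=
    CompactSpace.uniformContinuous_of_continuous f.continuous
  have hent : {q : ℚ_[p] × ℚ_[p] | dist q.1 q.2 < ε} ∈ 𝓤 ℚ_[p] := Metric.dist_mem_uniformity hε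
  have hU : {z : ZhatProd × ZhatProd | dist (f z.1) (f z.2) < ε} ∈ 𝓤 ZhatProd := hUC hent
  rw [uniformity_eq_comap_nhds_zero, Filter.mem_comap] at hU
  obtain ⟨W, hW, hWsub⟩ := hU
  obtain ⟨N, hN, hsub⟩ := exists_modSet_subset hW
  refine ⟨N, hN, fun x y hxy => ?_⟩
  have : ((x, y) : ZhatProd × ZhatProd) ∈ (fun z : ZhatProd × ZhatProd => z.2 - z.1) ⁻¹' W :=
    hsub hxy
  have hd := hWsub this
  simp only [Set.mem_setOf_eq] at hd
  rw [← dist_eq_norm]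
  exact le_of_lt (by rwa [dist_comm])

lemma sum_range_mul_eq {M : Type*} [AddCommMonoid M] (g : ℕ → M) (A B : ℕ) :
    ∑ k ∈ Finset.range (A * B), g k
      = ∑ t ∈ Finset.range B, ∑ j ∈ Finset.range A, g (A * t + j) := by
  induction B with
  | zero => simp
  | succ B ih =>
    rw [Nat.mul_succ, Finset.sum_range_add, ih, Finset.sum_range_succ]

/-- Key estimate: sums of `f` over long blocks of consecutive integers are small. -/
lemma block_estimate (f : C(ZhatProd, ℚ_[p])) {ε : ℝ} (hε : 0 < ε) :
    ∃ N : ℕ, N ≠ 0 ∧ ∀ a : ℤ,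
      ‖∑ k ∈ Finset.range N, f ((a : ZhatProd) + (k : ℕ) + 1)‖ ≤ ε := by
  obtain ⟨N₀, hN₀, hUC⟩ := unif_cont f hε
  have hp1 : (1 : ℝ) < (p : ℝ) := by exact_mod_cast (Fact.out : p.Prime).one_lt
  obtain ⟨m, hm⟩ : ∃ m : ℕ, ((p : ℝ)⁻¹) ^ m < ε / (‖f‖ + 1) := by
    refine exists_pow_lt_of_lt_one (div_pos hε (by positivity)) ?_
    rw [inv_lt_one_iff₀]; right; exact hp1
  have hpm : (p : ℝ) ^ (-(m:ℤ)) * ‖f‖ ≤ ε := by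
    have h1 : (p : ℝ) ^ (-(m:ℤ)) = ((p : ℝ)⁻¹) ^ m := by
      rw [zpow_neg, ← zpow_natCast, inv_zpow]
    rw [h1]
    calc ((p : ℝ)⁻¹) ^ m * ‖f‖ ≤ (ε / (‖f‖ + 1)) * (‖f‖ + 1) := by
          refine mul_le_mul hm.le (by linarith [norm_nonneg f]) (norm_nonneg f) ?_
          positivity
      _ = ε := div_mul_cancel₀ ε (by positivity)
  refine ⟨N₀ * p ^ m, Nat.mul_ne_zero hN₀ (pow_ne_zero _ (Fact.out : p.Prime).pos.ne'), fun a => ?_⟩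
  set g : ℕ → ℚ_[p] := fun k => f ((a : ZhatProd) + (k : ℕ) + 1) with hg
  rw [sum_range_mul_eq g N₀ (p ^ m), Finset.sum_comm]
  refine IsUltrametricDist.norm_sum_le_of_forall_le_of_nonneg hε.le fun j _ => ?_
  have hsplit : ∑ t ∈ Finset.range (p ^ m), g (N₀ * t + j)
      = (∑ t ∈ Finset.range (p ^ m), (g (N₀ * t + j) - g j)) + (p ^ m) • g j := by
    rw [Finset.sum_sub_distrib, Finset.sum_const, Finset.card_range]
    ring_nf
  rw [hsplit]
  refine le_trans (IsUltrametricDist.norm_add_le_max _ _) (max_le ?_ ?_)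
  · refine IsUltrametricDist.norm_sum_le_of_forall_le_of_nonneg hε.le fun t _ => ?_
    refine hUC _ _ ?_
    refine ⟨((t : ℕ) : ZhatProd), ?_⟩
    push_cast
    ring
  · have h1 : (p ^ m) • g j = ((p : ℚ_[p]) ^ m) * g j := by
      rw [nsmul_eq_mul]; push_cast; ring
    rw [h1, norm_mul, Padic.norm_p_pow]
    calc (p:ℝ) ^ (-(m:ℤ)) * ‖g j‖ ≤ (p:ℝ) ^ (-(m:ℤ)) * ‖f‖ := by
          refine mul_le_mul_of_nonneg_left (f.norm_coe_le_norm _) ?_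
          positivity
      _ ≤ ε := hpm

/-- The partial-sum function on `ℤ`. -/
noncomputable def S (f : C(ZhatProd, ℚ_[p])) : ℤ → ℚ_[p] := fun n =>
  if 0 ≤ n then ∑ k ∈ Finset.range n.toNat, f (((k : ℤ) : ZhatProd) + 1)
  else -∑ k ∈ Finset.range (-n).toNat, f (((n + k : ℤ) : ZhatProd) + 1)

lemma S_succ_sub (f : C(ZhatProd, ℚ_[p])) (n : ℤ) :
    S f (n + 1) - S f n = f ((n : ZhatProd) + 1) := by
  unfold S
  rcases le_or_gt 0 n with hn | hn
  · rw [if_pos hn, if_pos (by omega)]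
    have h1 : (n + 1).toNat = n.toNat + 1 := by omega
    rw [h1, Finset.sum_range_succ]
    have h2 : ((n.toNat : ℤ) : ZhatProd) = (n : ZhatProd) := by
      rw [Int.toNat_of_nonneg hn]
    rw [h2]
    ring
  · rcases eq_or_lt_of_le (by omega : n + 1 ≤ 0) with h0 | hneg
    · rw [if_pos (le_of_eq h0.symm), if_neg (by omega)]
      have h1 : (n + 1).toNat = 0 := by omega
      have h2 : (-n).toNat = 1 := by omega
      rw [h1, h2, Finset.sum_range_one]
      have h4 : ((n + (0:ℕ) : ℤ) : ZhatProd) = (n : ZhatProd) := by push_cast; ring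
      rw [h4]
      ring
    · rw [if_neg (by omega), if_neg (by omega)]
      set m := (-n).toNat with hm
      have hm2 : 2 ≤ m := by omega
      have h1 : (-(n + 1)).toNat = m - 1 := by omega
      rw [h1]
      have h2 : m = (m - 1) + 1 := by omega
      have h3 : ∑ k ∈ Finset.range m, f (((n + k : ℤ) : ZhatProd) + 1)
          = (∑ k ∈ Finset.range (m - 1), f (((n + 1 + k : ℤ) : ZhatProd) + 1))
            + f ((n : ZhatProd) + 1) := by
        rw [h2, Finset.sum_range_succ']
        congr 1
        · refine Finset.sum_congr rfl fun k _ => ?_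
          congr 2
          push_cast
          ring
        · norm_num
      rw [h3]
      ring
lemma S_add_nat (f : C(ZhatProd, ℚ_[p])) (n : ℤ) (L : ℕ) :
    S f (n + L) - S f n = ∑ k ∈ Finset.range L, f ((n : ZhatProd) + (k : ℕ) + 1) := by
  induction L with
  | zero => simp
  | succ L ih =>
    have h1 : S f (n + (L + 1 : ℕ)) - S f n
        = (S f ((n + L) + 1) - S f (n + L)) + (S f (n + L) - S f n) := by
      have : (n + (L + 1 : ℕ) : ℤ) = (n + L) + 1 := by push_cast; ring
      rw [this]; ring
    rw [h1, ih, S_succ_sub, Finset.sum_range_succ]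
    have h2 : ((n + L : ℤ) : ZhatProd) = (n : ZhatProd) + (L : ℕ) := by push_cast; ring
    rw [h2]
    ring
/-- Uniform continuity of `S` for the `Ẑ`-adic uniformity on `ℤ`. -/
lemma S_unif (f : C(ZhatProd, ℚ_[p])) {ε : ℝ} (hε : 0 < ε) :
    ∃ N : ℕ, N ≠ 0 ∧ ∀ n n' : ℤ, (N : ℤ) ∣ (n' - n) → ‖S f n' - S f n‖ ≤ ε := by
  obtain ⟨N, hN, hblock⟩ := block_estimate f hε
  have hstep : ∀ n : ℤ, ∀ j : ℕ, ‖S f (n + (N : ℤ) * j) - S f n‖ ≤ ε := by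
    intro n j
    induction j with
    | zero => simpa using hε.le
    | succ j ih =>
      have ha : (n + (N:ℤ) * ((j+1:ℕ):ℤ)) = (n + (N:ℤ) * j) + ((N:ℕ):ℤ) := by push_cast; ring
      rw [ha]
      have h1 : S f ((n + (N:ℤ)*j) + ((N:ℕ):ℤ)) - S f n
          = (S f ((n + (N:ℤ)*j) + ((N:ℕ):ℤ)) - S f (n + (N:ℤ)*j))
            + (S f (n + (N:ℤ)*j) - S f n) := by ring
      rw [h1]
      refine le_trans (IsUltrametricDist.norm_add_le_max _ _) (max_le ?_ ih)
      rw [S_add_nat]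
      exact hblock _
  refine ⟨N, hN, fun n n' hdvd => ?_⟩
  obtain ⟨c, hc⟩ := hdvd
  rcases le_or_gt 0 c with hc0 | hc0
  · have : n' = n + (N : ℤ) * c.toNat := by rw [Int.toNat_of_nonneg hc0]; linarith [hc]
    rw [this]
    exact hstep n _
  · rw [norm_sub_rev]
    have : n = n' + (N : ℤ) * (-c).toNat := by rw [Int.toNat_of_nonneg (by omega), mul_neg]; linarith [hc]
    rw [this]
    exact hstep n' _

lemma modSet_add {N : ℕ} {x y : ZhatProd} (hx : x ∈ modSet N) (hy : y ∈ modSet N) :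
    x + y ∈ modSet N := by
  obtain ⟨a, rfl⟩ := hx; obtain ⟨b, rfl⟩ := hy
  exact ⟨a + b, by ring⟩

lemma int_dvd_of_mem_modSet {N : ℕ} (hN : N ≠ 0) {c : ℤ}
    (h : ((c : ℤ) : ZhatProd) ∈ modSet N) : (N : ℤ) ∣ c := by
  rcases eq_or_ne c 0 with rfl | hc
  · simp
  have hdvd : ∀ q : Nat.Primes, ((q : ℕ) ^ (N.factorization (q : ℕ))) ∣ c.natAbs := by
    intro q
    have h1 := (mem_modSet_iff hN).mp h q
    have h2 : ((c : ZhatProd) q) = ((c : ℤ) : ℤ_[(q : ℕ)]) := rfl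
    rw [h2] at h1
    have h3 := (PadicInt.norm_int_le_pow_iff_dvd (k := c) (n := N.factorization (q:ℕ))).mp h1
    have h4 : (((q:ℕ) ^ N.factorization (q:ℕ) : ℕ) : ℤ) ∣ c := by exact_mod_cast h3
    rwa [← Int.natAbs_dvd_natAbs, Int.natAbs_natCast] at h4
  have hN' : N ∣ c.natAbs := by
    rw [← Nat.factorization_le_iff_dvd hN (Int.natAbs_ne_zero.mpr hc)]
    rw [Finsupp.le_def]
    intro ℓ
    by_cases hℓ : ℓ.Prime
    · exact (Nat.Prime.pow_dvd_iff_le_factorization hℓ (Int.natAbs_ne_zero.mpr hc)).mp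
        (hdvd ⟨ℓ, hℓ⟩)
    · simp [Nat.factorization_eq_zero_of_not_prime _ hℓ]
  have := Int.natCast_dvd_natCast.mpr hN'
  rwa [Int.natCast_natAbs, dvd_abs] at this

lemma modSet_nhd {N : ℕ} (hN : N ≠ 0) (x : ZhatProd) :
    {y : ZhatProd | y - x ∈ modSet N} ∈ 𝓝 x := by
  have hcont : Continuous fun y : ZhatProd => y - x := by continuity
  have := hcont.continuousAt (x := x).preimage_mem_nhds (by
    simpa using modSet_mem_nhds hN)
  exact this

/-- The main theorem, in the namespace. -/
theorem main (p : ℕ) [Fact p.Prime] (f : C(ZhatProd, ℚ_[p])) :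
    ∃ g : C(ZhatProd, ℚ_[p]), ∀ x : ZhatProd, g x - g (x - 1) = f x := by
  classical
  set e : ℤ → ZhatProd := fun n => (n : ZhatProd) with he
  have hdense : DenseRange e := denseRange_intCast
  have hNB : ∀ x : ZhatProd, (Filter.comap e (𝓝 x)).NeBot := by
    intro x
    rw [Filter.comap_neBot_iff]
    intro t ht
    have hx : x ∈ closure (Set.range e) := by
      rw [hdense.closure_range]; trivial
    obtain ⟨y, hyt, n, rfl⟩ := mem_closure_iff_nhds.mp hx t ht
    exact ⟨n, hyt⟩
  -- the extension candidate
  have hcauchy : ∀ x : ZhatProd, Cauchy (Filter.map (S f) (Filter.comap e (𝓝 x))) := by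
    intro x
    rw [Metric.cauchy_iff]
    refine ⟨Filter.NeBot.map (hNB x) _, fun ε hε => ?_⟩
    obtain ⟨N, hN, hS⟩ := S_unif f (half_pos hε)
    refine ⟨S f '' (e ⁻¹' {y | y - x ∈ modSet N}), Filter.image_mem_map
      (Filter.preimage_mem_comap (modSet_nhd hN x)), ?_⟩
    rintro u ⟨n, hn, rfl⟩ v ⟨n', hn', rfl⟩
    have hsub : e n - e n' ∈ modSet N := by
      have := modSet_sub hn hn'
      simpa using this
    have hdvd : (N : ℤ) ∣ (n - n') := int_dvd_of_mem_modSet hN (by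
      rw [show (((n - n' : ℤ)) : ZhatProd) = e n - e n' by push_cast [he]; ring]; exact hsub)
    have := hS n' n hdvd
    rw [dist_eq_norm]
    calc ‖S f n - S f n'‖ ≤ ε / 2 := this
      _ < ε := by linarith
  set g₀ : ZhatProd → ℚ_[p] := fun x => lim (Filter.map (S f) (Filter.comap e (𝓝 x))) with hg₀
  have htends : ∀ x : ZhatProd,
      Filter.Tendsto (S f) (Filter.comap e (𝓝 x)) (𝓝 (g₀ x)) := by
    intro x
    exact (hcauchy x).le_nhds_lim
  have hval : ∀ n : ℤ, g₀ (e n) = S f n := by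
    intro n
    have h1 : Filter.Tendsto (S f) (pure n) (𝓝 (g₀ (e n))) := by
      refine (htends (e n)).mono_left ?_
      rw [← Filter.map_le_iff_le_comap]
      simpa using pure_le_nhds (e n)
    have h2 : Filter.Tendsto (S f) (pure n) (𝓝 (S f n)) := tendsto_pure_nhds _ _
    exact tendsto_nhds_unique h1 h2
  -- uniform estimate for g₀
  have hg₀unif : ∀ ε : ℝ, 0 < ε → ∃ N : ℕ, N ≠ 0 ∧ ∀ x y : ZhatProd,
      y - x ∈ modSet N → ‖g₀ y - g₀ x‖ ≤ ε := by
    intro ε hε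
    obtain ⟨N, hN, hS⟩ := S_unif f hε
    refine ⟨N, hN, fun x y hxy => ?_⟩
    have hex : ∀ z : ZhatProd, ∃ n : ℤ, ‖S f n - g₀ z‖ ≤ ε ∧ e n - z ∈ modSet N := by
      intro z
      have h1 : {n : ℤ | ‖S f n - g₀ z‖ ≤ ε} ∈ Filter.comap e (𝓝 z) := by
        have : Metric.closedBall (g₀ z) ε ∈ 𝓝 (g₀ z) := Metric.closedBall_mem_nhds _ hε
        have h2 := htends z this
        exact Filter.mem_of_superset h2 (fun n hn => by simpa [Metric.mem_closedBall, dist_eq_norm] using hn)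
      have h3 : e ⁻¹' {w | w - z ∈ modSet N} ∈ Filter.comap e (𝓝 z) :=
        Filter.preimage_mem_comap (modSet_nhd hN z)
      haveI := hNB z
      obtain ⟨n, hn1, hn2⟩ := Filter.nonempty_of_mem (Filter.inter_mem h1 h3)
      exact ⟨n, hn1, hn2⟩
    obtain ⟨n, hn1, hn2⟩ := hex x
    obtain ⟨n', hn'1, hn'2⟩ := hex y
    have hmem : e n' - e n ∈ modSet N := by
      have h4 : e n' - e n = (e n' - y) - (e n - x) + (y - x) := by ring
      rw [h4]
      exact modSet_add (modSet_sub hn'2 hn2) hxy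
    have hdvd : (N : ℤ) ∣ (n' - n) := int_dvd_of_mem_modSet hN (by
      rw [show (((n' - n : ℤ)) : ZhatProd) = e n' - e n by push_cast [he]; ring]; exact hmem)
    have h5 := hS n n' hdvd
    have h6 : g₀ y - g₀ x = (g₀ y - S f n') + (S f n' - S f n) + (S f n - g₀ x) := by ring
    rw [h6]
    refine le_trans (IsUltrametricDist.norm_add_le_max _ _) (max_le (le_trans
      (IsUltrametricDist.norm_add_le_max _ _) (max_le ?_ h5)) hn1)
    rw [norm_sub_rev]
    exact hn'1
  have hcont : Continuous g₀ := by
    rw [continuous_iff_continuousAt]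
    intro x
    rw [ContinuousAt, Metric.tendsto_nhds]
    intro ε hε
    obtain ⟨N, hN, hbd⟩ := hg₀unif (ε / 2) (half_pos hε)
    refine Filter.mem_of_superset (modSet_nhd hN x) fun y hy => ?_
    simp only [Set.mem_setOf_eq]
    rw [dist_eq_norm]
    calc ‖g₀ y - g₀ x‖ ≤ ε / 2 := hbd x y hy
      _ < ε := by linarith
  refine ⟨⟨g₀, hcont⟩, ?_⟩
  have hfun : (fun x : ZhatProd => g₀ x - g₀ (x - 1)) = fun x => f x := by
    refine Continuous.ext_on hdense ?_ ?_ ?_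
    · exact hcont.sub (hcont.comp (continuous_id.sub continuous_const))
    · exact f.continuous
    · rintro x ⟨n, rfl⟩
      show g₀ (e n) - g₀ (e n - 1) = f (e n)
      have h1 : e n - 1 = e (n - 1) := by push_cast [he]; ring
      rw [h1, hval, hval]
      have h2 := S_succ_sub f (n - 1)
      rw [show n - 1 + 1 = n by ring] at h2
      rw [h2]
      congr 1
      push_cast [he]
      ring
  intro x
  exact congrFun hfun x
end ZhatPrim

/-- for every continuous `f : Ẑ → ℚ_p` there is a continuous `g : Ẑ → ℚ_p`
with `g x - g (x - 1) = f x` for all `x`; i.e. `H¹(ℤ, C(Ẑ, ℚ_p)) = 0`. -/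
theorem exists_continuous_primitive_on_Zhat
    (p : ℕ) [Fact p.Prime] (f : C(ZhatProd, ℚ_[p])) :
    ∃ g : C(ZhatProd, ℚ_[p]), ∀ x : ZhatProd, g x - g (x - 1) = f x := by
  exact ZhatPrim.main p f
end

section
/- Let p be a prime number, let k be a commutative ring in which p · 1 = 0, let N ≥ 1 be an integer, and let φ : ℤ/Nℤ → k be any function. Then there exists a function ψ : ℤ/(Np)ℤ → k such that for every integer x, ψ(x mod Np) − ψ((x − 1) mod Np) = φ(x mod N). -/
lemma sum_range_mul_periodic {k : Type*} [CommRing k] (N : ℕ) (φ : ZMod N → k) (m : ℕ) :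
    ∑ i ∈ Finset.range (N * m), φ (i : ZMod N) = m • ∑ i ∈ Finset.range N, φ (i : ZMod N) := by
  induction m with
  | zero => simp
  | succ m ih =>
    have h : N * (m + 1) = N * m + N := by ring
    rw [h, Finset.sum_range_add, ih, succ_nsmul]
    congr 1
    apply Finset.sum_congr rfl
    intro i _
    congr 1
    push_cast
    simp

/-- periodization step.  If `k` is a commutative ring with `p · 1 = 0` (`p` prime)
and `φ : ℤ/Nℤ → k` (`N ≥ 1`), then there is `ψ : ℤ/(Np)ℤ → k` whose difference function
realizes `φ`. -/
theorem exists_primitive_of_periodic_char_p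
    (p : ℕ) (hp : p.Prime) (k : Type*) [CommRing k] (hpk : (p : k) = 0)
    (N : ℕ) (hN : 1 ≤ N) (φ : ZMod N → k) :
    ∃ ψ : ZMod (N * p) → k,
      ∀ x : ℤ, ψ ((x : ℤ) : ZMod (N * p)) - ψ (((x - 1 : ℤ)) : ZMod (N * p))
        = φ ((x : ℤ) : ZMod N) := by
  have hNp : 0 < N * p := Nat.mul_pos hN hp.pos
  haveI : NeZero (N * p) := ⟨hNp.ne'⟩
  set S : ℕ → k := fun n => ∑ i ∈ Finset.range n, φ (i : ZMod N) with hS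
  have hSNp : S (N * p) = 0 := by
    rw [hS]
    simp only
    rw [sum_range_mul_periodic N φ p, nsmul_eq_mul, hpk, zero_mul]
  refine ⟨fun z => S (z.val + 1), fun x => ?_⟩
  set z := ((x : ℤ) : ZMod (N * p)) with hz
  have hx1 : ((x - 1 : ℤ) : ZMod (N * p)) = z - 1 := by push_cast [hz]; ring
  rw [hx1]
  have hφ : φ ((x : ℤ) : ZMod N) = φ ((z.val : ℕ) : ZMod N) := by
    congr 1
    have h1 : ((z.val : ℤ) : ZMod (N * p)) = ((x : ℤ) : ZMod (N * p)) := by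
      push_cast
      simp [hz, ZMod.natCast_val, ZMod.cast_id]
    rw [ZMod.intCast_eq_intCast_iff] at h1
    have h2 : (z.val : ℤ) ≡ x [ZMOD N] := h1.of_dvd ⟨(p : ℤ), by push_cast; ring⟩
    rw [← ZMod.intCast_eq_intCast_iff] at h2
    push_cast at h2 ⊢
    exact h2.symm
  rw [hφ]
  rcases Nat.eq_zero_or_pos z.val with hv | hv
  · have hz0 : z = 0 := by
      rw [← ZMod.val_eq_zero]; exact hv
    have hneg : ((-1 : ZMod (N * p))).val = N * p - 1 := by
      have h1 : (-1 : ZMod (N * p)) = ((N * p - 1 : ℕ) : ZMod (N * p)) := by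
        rw [Nat.cast_sub hNp, ZMod.natCast_self]; ring
      rw [h1, ZMod.val_cast_of_lt (Nat.sub_lt hNp one_pos)]
    simp only [hz0, hv, zero_sub, ZMod.val_zero, hneg,
      Nat.succ_pred_eq_of_pos hNp, hSNp, Nat.cast_zero]
    rw [Nat.sub_add_cancel hNp]
    simpa [hS] using hSNp
  · obtain ⟨v, hvv⟩ := Nat.exists_eq_succ_of_ne_zero hv.ne'
    rw [Nat.succ_eq_add_one] at hvv
    have hvlt : v + 1 < N * p := hvv ▸ ZMod.val_lt z
    have hzv : z = ((v + 1 : ℕ) : ZMod (N * p)) := by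
      rw [← hvv, ZMod.natCast_val, ZMod.cast_id]
    have hz1 : z - 1 = ((v : ℕ) : ZMod (N * p)) := by
      rw [hzv]; push_cast; ring
    have hval1 : (z - 1).val = v := by
      rw [hz1, ZMod.val_cast_of_lt (lt_trans (Nat.lt_succ_self v) hvlt)]
    simp only [hvv, hval1]
    simp [hS, Finset.sum_range_succ]
end

section
/- Let Ẑ denote the topological ring ∏_ℓ ℤ_ℓ (product over all primes ℓ, product topology), let p be a fixed prime, and let δ be the ℤ_p-linear endomorphism of the ℤ_p-module LocallyConstant(Ẑ, ℤ_p) of locally constant functions Ẑ → ℤ_p defined by (δg)(x) = g(x) − g(x − 1), where 1 is the multiplicative identity of Ẑ. Then the cokernel of δ is isomorphic, as a ℤ_p-module, to ℚ_p. In particular, a quotient of two ℤ_p-modules containing no ℚ_p-line can be a nonzero ℚ_p-vector space. -/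
/-- The difference operator `δ` on locally constant functions `Ẑ → ℤ_p`,
`(δ g)(x) = g(x) - g(x - 1)`. -/
noncomputable def deltaOp (p : ℕ) [Fact p.Prime] :
    LocallyConstant ZhatProd ℤ_[p] →ₗ[ℤ_[p]] LocallyConstant ZhatProd ℤ_[p] where
  toFun g :=
    ⟨fun x => g x - g (x - 1),
      g.isLocallyConstant.comp₂
        (g.isLocallyConstant.comp_continuous (continuous_id.sub continuous_const)) (· - ·)⟩
  map_add' g h := by
    ext x
    show (g x + h x) - (g (x - 1) + h (x - 1)) = (g x - g (x - 1)) + (h x - h (x - 1))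
    ring
  map_smul' c g := by
    ext x
    show c * g x - c * g (x - 1) = c * (g x - g (x - 1))
    ring

namespace CokerDeltaAux

open Filter Finset

instance (q : Nat.Primes) (n : ℕ) : NeZero ((q : ℕ) ^ n) :=
  ⟨pow_ne_zero n q.2.pos.ne'⟩

/-- agreement of `x y : Ẑ` modulo `q^n` for all `q ∈ S`. -/
def Agree (S : Finset Nat.Primes) (n : ℕ) (x y : ZhatProd) : Prop :=
  ∀ q ∈ S, PadicInt.toZModPow n (x q) = PadicInt.toZModPow n (y q)

/-- `g` factors through reduction mod `(S, n)`. -/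
def Fac {α : Type*} (S : Finset Nat.Primes) (n : ℕ) (g : ZhatProd → α) : Prop :=
  ∀ x y : ZhatProd, Agree S n x y → g x = g y

lemma toZModPow_eq_iff {P : ℕ} [Fact P.Prime] (n : ℕ) (z c : ℤ_[P]) :
    PadicInt.toZModPow n z = PadicInt.toZModPow n c ↔ ‖z - c‖ ≤ (P : ℝ) ^ (-(n : ℤ)) := by
  rw [PadicInt.norm_le_pow_iff_mem_span_pow, ← PadicInt.ker_toZModPow, RingHom.mem_ker,
    map_sub, sub_eq_zero]

lemma isOpen_toZModPow_fiber {P : ℕ} [Fact P.Prime] (n : ℕ) (c : ℤ_[P]) :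
    IsOpen {z : ℤ_[P] | PadicInt.toZModPow n z = PadicInt.toZModPow n c} := by
  have : {z : ℤ_[P] | PadicInt.toZModPow n z = PadicInt.toZModPow n c} =
      Metric.ball c ((P : ℝ) ^ (-(n : ℤ) + 1)) := by
    ext z
    rw [Metric.mem_ball, dist_eq_norm, Set.mem_setOf_eq, toZModPow_eq_iff,
      PadicInt.norm_le_pow_iff_norm_lt_pow_add_one]
  rw [this]; exact Metric.isOpen_ball

lemma toZModPow_fiber_subset {P : ℕ} [Fact P.Prime] (c : ℤ_[P]) {V : Set ℤ_[P]}
    (hV : V ∈ nhds c) :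
    ∃ n : ℕ, {z : ℤ_[P] | PadicInt.toZModPow n z = PadicInt.toZModPow n c} ⊆ V := by
  obtain ⟨ε, hε, hball⟩ := Metric.mem_nhds_iff.mp hV
  obtain ⟨n, hn⟩ := PadicInt.exists_pow_neg_lt P hε
  refine ⟨n, fun z hz => hball ?_⟩
  rw [Set.mem_setOf_eq, toZModPow_eq_iff] at hz
  exact Metric.mem_ball.mpr <| lt_of_le_of_lt (by rwa [dist_eq_norm]) hn

lemma toZModPow_mono {P : ℕ} [Fact P.Prime] {m n : ℕ} (h : m ≤ n) {z c : ℤ_[P]}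
    (hz : PadicInt.toZModPow n z = PadicInt.toZModPow n c) :
    PadicInt.toZModPow m z = PadicInt.toZModPow m c := by
  rw [← PadicInt.cast_toZModPow m n h z, ← PadicInt.cast_toZModPow m n h c, hz]

/-- the "fiber" neighbourhood of `x`. -/
def fib (S : Finset Nat.Primes) (n : ℕ) (x : ZhatProd) : Set ZhatProd :=
  {y | Agree S n y x}

lemma mem_fib_self (S : Finset Nat.Primes) (n : ℕ) (x : ZhatProd) : x ∈ fib S n x :=
  fun _ _ => rfl

lemma isOpen_fib (S : Finset Nat.Primes) (n : ℕ) (x : ZhatProd) : IsOpen (fib S n x) := by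
  have : fib S n x = ⋂ q ∈ S, (fun y : ZhatProd => y q) ⁻¹'
      {z | PadicInt.toZModPow n z = PadicInt.toZModPow n (x q)} := by
    ext y; simp [fib, Agree, Set.mem_iInter]
  rw [this]
  exact isOpen_biInter_finset fun q _ =>
    (isOpen_toZModPow_fiber n (x q)).preimage (continuous_apply q)

lemma agree_mono {S S' : Finset Nat.Primes} {n n' : ℕ} (hS : S ⊆ S') (hn : n ≤ n')
    {x y : ZhatProd} (h : Agree S' n' x y) : Agree S n x y :=
  fun q hq => toZModPow_mono hn (h q (hS hq))

/-- every neighbourhood of `x` contains a fiber. -/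
lemma exists_fib_subset {x : ZhatProd} {V : Set ZhatProd} (hV : V ∈ nhds x) :
    ∃ S n, fib S n x ⊆ V := by
  rw [nhds_pi, Filter.mem_pi] at hV
  obtain ⟨I, hIfin, t, ht, hsub⟩ := hV
  have H : ∀ q : Nat.Primes, ∃ m : ℕ,
      {z | PadicInt.toZModPow m z = PadicInt.toZModPow m (x q)} ⊆ t q :=
    fun q => toZModPow_fiber_subset (x q) (ht q)
  choose ν hν using H
  classical
  refine ⟨hIfin.toFinset, hIfin.toFinset.sup ν, fun y hy => hsub fun q hq => ?_⟩
  have hqS : q ∈ hIfin.toFinset := hIfin.mem_toFinset.mpr hq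
  exact hν q <| toZModPow_mono (Finset.le_sup hqS) (hy q hqS)

/-- Step 1: every locally constant function factors through some `(S, n)`. -/
lemma exists_fac {α : Type*} (g : LocallyConstant ZhatProd α) : ∃ S n, Fac S n g := by
  classical
  have hx : ∀ x : ZhatProd, ∃ S n, fib S n x ⊆ {y | g y = g x} := fun x =>
    exists_fib_subset ((g.isLocallyConstant.isOpen_fiber (g x)).mem_nhds rfl)
  choose Sx nx hx using hx
  obtain ⟨t, ht⟩ := isCompact_univ.elim_finite_subcover (fun x => fib (Sx x) (nx x) x)
    (fun x => isOpen_fib _ _ _) (fun x _ => Set.mem_iUnion.mpr ⟨x, mem_fib_self _ _ _⟩)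
  refine ⟨t.biUnion Sx, t.sup nx, fun y z hyz => ?_⟩
  obtain ⟨x, hxt, hyx⟩ := Set.mem_iUnion₂.mp (ht (Set.mem_univ y))
  have hsub : Sx x ⊆ t.biUnion Sx := fun q hq => Finset.mem_biUnion.mpr ⟨x, hxt, hq⟩
  have hzy : Agree (Sx x) (nx x) z y := agree_mono hsub (Finset.le_sup hxt)
    fun q hq => (hyz q hq).symm
  have hzx : z ∈ fib (Sx x) (nx x) x := fun q hq => (hzy q hq).trans (hyx q hq)
  exact ((hx x hyx).trans (hx x hzx).symm)

lemma fac_isLocallyConstant {α : Type*} {S : Finset Nat.Primes} {n : ℕ}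
    {g : ZhatProd → α} (hg : Fac S n g) : IsLocallyConstant g :=
  (IsLocallyConstant.iff_exists_open g).mpr fun x =>
    ⟨fib S n x, isOpen_fib S n x, mem_fib_self S n x, fun y hy => hg y x hy⟩

/-- the modulus. -/
def Mnum (S : Finset Nat.Primes) (n : ℕ) : ℕ := ∏ q ∈ S, (q : ℕ) ^ n

lemma Mnum_pos (S : Finset Nat.Primes) (n : ℕ) : 0 < Mnum S n :=
  Finset.prod_pos fun q _ => pow_pos q.2.pos n

lemma dvd_Mnum {S : Finset Nat.Primes} {q : Nat.Primes} (hq : q ∈ S) (n : ℕ) :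
    (q : ℕ) ^ n ∣ Mnum S n :=
  Finset.dvd_prod_of_mem _ hq

lemma agree_natCast {S : Finset Nat.Primes} {n : ℕ} {a b : ℕ}
    (h : ∀ q ∈ S, ((a : ℕ) : ZMod ((q : ℕ) ^ n)) = (b : ZMod ((q : ℕ) ^ n))) :
    Agree S n ((a : ℕ) : ZhatProd) ((b : ℕ) : ZhatProd) := by
  intro q hq
  have ha : ((a : ℕ) : ZhatProd) q = ((a : ℕ) : ℤ_[(q : ℕ)]) := Pi.natCast_apply _ _
  have hb : ((b : ℕ) : ZhatProd) q = ((b : ℕ) : ℤ_[(q : ℕ)]) := Pi.natCast_apply _ _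
  rw [ha, hb, map_natCast, map_natCast]
  exact h q hq

lemma fac_period {p : ℕ} [Fact p.Prime] {S : Finset Nat.Primes} {n : ℕ}
    {g : ZhatProd → ℤ_[p]} (hg : Fac S n g) (k : ℕ) :
    g (((k + Mnum S n : ℕ) : ZhatProd)) = g ((k : ℕ) : ZhatProd) := by
  refine hg _ _ (agree_natCast fun q hq => ?_)
  have : ((Mnum S n : ℕ) : ZMod ((q : ℕ) ^ n)) = 0 :=
    (ZMod.natCast_eq_zero_iff _ _).mpr (dvd_Mnum hq n)
  push_cast
  rw [this, add_zero]

lemma periodic_sum {A : Type*} [AddCommMonoid A] {f : ℕ → A} {M : ℕ}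
    (hf : ∀ k, f (k + M) = f k) (c : ℕ) :
    ∑ i ∈ range (c * M), f i = c • ∑ i ∈ range M, f i := by
  have shift : ∀ c j, f (c * M + j) = f j := by
    intro c j
    induction c with
    | zero => simp
    | succ c ihc =>
      have : (c + 1) * M + j = c * M + j + M := by ring
      rw [this, hf, ihc]
  induction c with
  | zero => simp
  | succ c ih =>
    rw [Nat.succ_mul, Finset.sum_range_add, ih, succ_nsmul]
    have shift := shift c
    congr 1
    exact Finset.sum_congr rfl fun j _ => shift j

variable (p : ℕ) [Fact p.Prime]

/-- average of `g` over `0, …, N-1` (in `ℚ_p`). -/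
noncomputable def avg (g : ZhatProd → ℤ_[p]) (N : ℕ) : ℚ_[p] :=
  (N : ℚ_[p])⁻¹ * ∑ i ∈ range N, ((g ((i : ℕ) : ZhatProd) : ℤ_[p]) : ℚ_[p])

lemma avg_of_dvd {S : Finset Nat.Primes} {n : ℕ} {g : ZhatProd → ℤ_[p]}
    (hg : Fac S n g) {N : ℕ} (hN : Mnum S n ∣ N) (hN0 : 0 < N) :
    avg p g N = avg p g (Mnum S n) := by
  obtain ⟨c, rfl⟩ := hN
  set M := Mnum S n with hM
  have hMpos := Mnum_pos S n
  have hcpos : 0 < c := Nat.pos_of_ne_zero fun h => by simp [h] at hN0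
  have hper : ∀ k : ℕ, (fun i : ℕ => ((g ((i : ℕ) : ZhatProd) : ℤ_[p]) : ℚ_[p])) (k + M)
      = (fun i : ℕ => ((g ((i : ℕ) : ZhatProd) : ℤ_[p]) : ℚ_[p])) k := by
    intro k; simp only; rw [fac_period hg k]
  rw [avg, avg, mul_comm M c, periodic_sum hper c, nsmul_eq_mul]
  have hM0 : (M : ℚ_[p]) ≠ 0 := Nat.cast_ne_zero.mpr hMpos.ne'
  have hc0 : (c : ℚ_[p]) ≠ 0 := Nat.cast_ne_zero.mpr hcpos.ne'
  push_cast
  field_simp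

lemma avg_tendsto {S : Finset Nat.Primes} {n : ℕ} {g : ZhatProd → ℤ_[p]}
    (hg : Fac S n g) :
    Tendsto (fun m => avg p g (Nat.factorial m)) atTop (nhds (avg p g (Mnum S n))) := by
  have : ∀ᶠ m in atTop, avg p g (Nat.factorial m) = avg p g (Mnum S n) := by
    filter_upwards [Filter.eventually_ge_atTop (Mnum S n)] with m hm
    exact avg_of_dvd p hg
      ((Nat.dvd_factorial (Mnum_pos S n) le_rfl).trans (Nat.factorial_dvd_factorial hm))
      m.factorial_pos
  exact Tendsto.congr' (Filter.EventuallyEq.symm this) tendsto_const_nhds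

/-- The Haar functional `μ`. -/
noncomputable def mu : LocallyConstant ZhatProd ℤ_[p] →ₗ[ℤ_[p]] ℚ_[p] where
  toFun g := limUnder atTop fun m => avg p g (Nat.factorial m)
  map_add' g h := by
    obtain ⟨S, n, hg⟩ := exists_fac g
    obtain ⟨S', n', hh⟩ := exists_fac h
    have hg' : Fac (S ∪ S') (max n n') (g : ZhatProd → ℤ_[p]) :=
      fun x y hxy => hg x y (agree_mono Finset.subset_union_left (le_max_left _ _) hxy)
    have hh' : Fac (S ∪ S') (max n n') (h : ZhatProd → ℤ_[p]) :=
      fun x y hxy => hh x y (agree_mono Finset.subset_union_right (le_max_right _ _) hxy)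
    have hgh : ∀ N : ℕ, avg p (↑(g + h)) N = avg p g N + avg p h N := by
      intro N
      simp only [avg, LocallyConstant.coe_add, Pi.add_apply, PadicInt.coe_add]
      rw [Finset.sum_add_distrib, mul_add]
    have t1 := avg_tendsto p hg'
    have t2 := avg_tendsto p hh'
    have t3 : Tendsto (fun m => avg p (↑(g + h)) (Nat.factorial m)) atTop
        (nhds (avg p g (Mnum (S ∪ S') (max n n')) + avg p h (Mnum (S ∪ S') (max n n')))) := by
      have := t1.add t2
      refine Tendsto.congr (fun m => (hgh (Nat.factorial m)).symm) this
    rw [t3.limUnder_eq, t1.limUnder_eq, t2.limUnder_eq]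
  map_smul' c g := by
    dsimp only [RingHom.id_apply]
    obtain ⟨S, n, hg⟩ := exists_fac g
    have hcg : ∀ N : ℕ, avg p (↑(c • g)) N = (c : ℚ_[p]) * avg p g N := by
      intro N
      simp only [avg, LocallyConstant.coe_smul, Pi.smul_apply, smul_eq_mul, PadicInt.coe_mul]
      rw [← Finset.mul_sum]
      ring
    have t1 := avg_tendsto p hg
    have t3 : Tendsto (fun m => avg p (↑(c • g)) (Nat.factorial m)) atTop
        (nhds ((c : ℚ_[p]) * avg p g (Mnum S n))) := by
      refine Tendsto.congr (fun m => (hcg (Nat.factorial m)).symm) (t1.const_mul _)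
    rw [t3.limUnder_eq, t1.limUnder_eq]
    rfl

lemma mu_eq {S : Finset Nat.Primes} {n : ℕ} {g : LocallyConstant ZhatProd ℤ_[p]}
    (hg : Fac S n g) : mu p g = avg p g (Mnum S n) :=
  (avg_tendsto p hg).limUnder_eq

lemma fac_delta {S : Finset Nat.Primes} {n : ℕ} {g : LocallyConstant ZhatProd ℤ_[p]}
    (hg : Fac S n g) : Fac S n (deltaOp p g) := by
  intro x y hxy
  show g x - g (x - 1) = g y - g (y - 1)
  have h1 : Agree S n (x - 1) (y - 1) := by
    intro q hq
    have hx := hxy q hq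
    simp only [Pi.sub_apply, Pi.one_apply, map_sub, map_one]
    rw [hx]
  rw [hg x y hxy, hg _ _ h1]

lemma mu_delta (g : LocallyConstant ZhatProd ℤ_[p]) : mu p (deltaOp p g) = 0 := by
  obtain ⟨S, n, hg⟩ := exists_fac g
  rw [mu_eq p (fac_delta p hg)]
  have key : ∑ i ∈ range (Mnum S n),
      (((deltaOp p g) ((i : ℕ) : ZhatProd) : ℤ_[p]) : ℚ_[p]) =
      ((g ((((Mnum S n : ℕ)) : ZhatProd) - 1) : ℤ_[p]) : ℚ_[p]) -
      ((g ((((0 : ℕ)) : ZhatProd) - 1) : ℤ_[p]) : ℚ_[p]) := by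
    have hterm : ∀ i ∈ range (Mnum S n),
        (((deltaOp p g) ((i : ℕ) : ZhatProd) : ℤ_[p]) : ℚ_[p]) =
        (fun k : ℕ => ((g ((((k : ℕ)) : ZhatProd) - 1) : ℤ_[p]) : ℚ_[p])) (i + 1) -
        (fun k : ℕ => ((g ((((k : ℕ)) : ZhatProd) - 1) : ℤ_[p]) : ℚ_[p])) i := by
      intro i _
      show ((g ((i : ℕ) : ZhatProd) - g (((i : ℕ) : ZhatProd) - 1) : ℤ_[p]) : ℚ_[p]) = _
      have hred : ((((i + 1 : ℕ)) : ZhatProd)) - 1 = ((i : ℕ) : ZhatProd) := by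
        push_cast; ring
      rw [PadicInt.coe_sub]
      simp only [hred]
    rw [Finset.sum_congr rfl hterm]
    exact Finset.sum_range_sub
      (fun k : ℕ => ((g ((((k : ℕ)) : ZhatProd) - 1) : ℤ_[p]) : ℚ_[p])) (Mnum S n)
  have heq : g ((((Mnum S n : ℕ)) : ZhatProd) - 1) = g ((((0 : ℕ)) : ZhatProd) - 1) := by
    apply hg
    intro q hq
    have hM0 : ((Mnum S n : ℕ) : ZMod ((q : ℕ) ^ n)) = 0 :=
      (ZMod.natCast_eq_zero_iff _ _).mpr (dvd_Mnum hq n)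
    simp only [Pi.sub_apply, Pi.one_apply, Pi.natCast_apply, map_sub, map_one, map_natCast,
      hM0, Nat.cast_zero, Pi.zero_apply, map_zero]
  rw [avg, key, heq, sub_self, mul_zero]

/-! ### representatives -/

lemma modEq_prod {ι : Type*} {a b : ℕ} (f : ι → ℕ) (t : Finset ι)
    (hcop : ∀ i ∈ t, ∀ j ∈ t, i ≠ j → (f i).Coprime (f j))
    (h : ∀ i ∈ t, a ≡ b [MOD f i]) : a ≡ b [MOD ∏ i ∈ t, f i] := by
  classical
  induction t using Finset.induction_on with
  | empty => simpa using Nat.modEq_one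
  | @insert i s hi ih =>
    rw [Finset.prod_insert hi]
    have cop : (f i).Coprime (∏ j ∈ s, f j) :=
      Nat.Coprime.prod_right fun j hj =>
        hcop i (Finset.mem_insert_self i s) j (Finset.mem_insert_of_mem hj)
          (fun hij => hi (hij ▸ hj))
    exact (Nat.modEq_and_modEq_iff_modEq_mul cop).mp
      ⟨h i (Finset.mem_insert_self i s),
       ih (fun a ha b hb hab => hcop a (Finset.mem_insert_of_mem ha) b
          (Finset.mem_insert_of_mem hb) hab)
        (fun j hj => h j (Finset.mem_insert_of_mem hj))⟩

lemma natCast_inj_of_lt {S : Finset Nat.Primes} {n : ℕ} {a b : ℕ}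
    (ha : a < Mnum S n) (hb : b < Mnum S n)
    (h : ∀ q ∈ S, ((a : ℕ) : ZMod ((q : ℕ) ^ n)) = (b : ZMod ((q : ℕ) ^ n))) : a = b := by
  have hmod : a ≡ b [MOD Mnum S n] := by
    refine modEq_prod _ S (fun q hq q' hq' hne => Nat.Coprime.pow n n
      ((Nat.coprime_primes q.2 q'.2).mpr fun hv => hne (Subtype.ext hv))) fun q hq =>
      (ZMod.natCast_eq_natCast_iff _ _ _).mp (h q hq)
  have := hmod
  rwa [Nat.ModEq, Nat.mod_eq_of_lt ha, Nat.mod_eq_of_lt hb] at this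

lemma exists_rep (S : Finset Nat.Primes) (n : ℕ) (x : ZhatProd) :
    ∃ k : ℕ, k < Mnum S n ∧
      ∀ q ∈ S, ((k : ℕ) : ZMod ((q : ℕ) ^ n)) = PadicInt.toZModPow n (x q) := by
  classical
  let e : Fin (Mnum S n) → (∀ q : S, ZMod ((q : ℕ) ^ n)) := fun k q => ((k : ℕ) : ZMod _)
  have hinj : Function.Injective e := by
    intro k k' h
    exact Fin.ext (natCast_inj_of_lt k.2 k'.2 fun q hq => congrFun h ⟨q, hq⟩)
  have hcard : Fintype.card (Fin (Mnum S n)) = Fintype.card (∀ q : S, ZMod ((q : ℕ) ^ n)) := by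
    rw [Fintype.card_fin, Fintype.card_pi]
    simp only [ZMod.card]
    rw [Finset.prod_coe_sort S (fun q => (q : ℕ) ^ n)]
    rfl
  have hsurj : Function.Surjective e :=
    ((Fintype.bijective_iff_injective_and_card e).mpr ⟨hinj, hcard⟩).2
  obtain ⟨k, hk⟩ := hsurj fun q => PadicInt.toZModPow n (x q.1)
  exact ⟨k, k.2, fun q hq => congrFun hk ⟨q, hq⟩⟩

noncomputable def rep (S : Finset Nat.Primes) (n : ℕ) (x : ZhatProd) : ℕ :=
  (exists_rep S n x).choose

lemma rep_lt (S : Finset Nat.Primes) (n : ℕ) (x : ZhatProd) : rep S n x < Mnum S n :=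
  (exists_rep S n x).choose_spec.1

lemma rep_spec (S : Finset Nat.Primes) (n : ℕ) (x : ZhatProd) :
    ∀ q ∈ S, ((rep S n x : ℕ) : ZMod ((q : ℕ) ^ n)) = PadicInt.toZModPow n (x q) :=
  (exists_rep S n x).choose_spec.2

lemma rep_eq_of {S : Finset Nat.Primes} {n : ℕ} (x : ZhatProd) {k : ℕ}
    (hk : k < Mnum S n)
    (h : ∀ q ∈ S, ((k : ℕ) : ZMod ((q : ℕ) ^ n)) = PadicInt.toZModPow n (x q)) :
    rep S n x = k :=
  natCast_inj_of_lt (rep_lt S n x) hk fun q hq => (rep_spec S n x q hq).trans (h q hq).symm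

lemma agree_rep (S : Finset Nat.Primes) (n : ℕ) (x : ZhatProd) :
    Agree S n x (((rep S n x : ℕ)) : ZhatProd) := by
  intro q hq
  rw [Pi.natCast_apply, map_natCast]
  exact (rep_spec S n x q hq).symm

lemma ker_le (g : LocallyConstant ZhatProd ℤ_[p]) (S : Finset Nat.Primes) (n : ℕ)
    (hg : Fac S n g)
    (hsum : ∑ i ∈ range (Mnum S n), g ((i : ℕ) : ZhatProd) = 0) :
    ∃ h : LocallyConstant ZhatProd ℤ_[p], deltaOp p h = g := by
  have hM := Mnum_pos S n
  set h0 : ZhatProd → ℤ_[p] :=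
    fun x => ∑ j ∈ range (rep S n x + 1), g ((j : ℕ) : ZhatProd) with hh0
  have hfac : Fac S n h0 := by
    intro x y hxy
    have hr : rep S n x = rep S n y :=
      rep_eq_of x (rep_lt S n y) fun q hq => (rep_spec S n y q hq).trans (hxy q hq).symm
    simp only [hh0, hr]
  refine ⟨⟨h0, fac_isLocallyConstant hfac⟩, ?_⟩
  ext x
  show h0 x - h0 (x - 1) = g x
  have hgx : g x = g ((rep S n x : ℕ) : ZhatProd) := hg _ _ (agree_rep S n x)
  have hsub : ∀ q ∈ S, PadicInt.toZModPow n ((x - 1) q) = PadicInt.toZModPow n (x q) - 1 := by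
    intro q hq
    simp only [Pi.sub_apply, Pi.one_apply, map_sub, map_one]
  rcases Nat.eq_zero_or_pos (rep S n x) with h0x | h0x
  · have hrx1 : rep S n (x - 1) = Mnum S n - 1 := by
      refine rep_eq_of _ (Nat.sub_lt hM one_pos) fun q hq => ?_
      have hM0 : ((Mnum S n : ℕ) : ZMod ((q : ℕ) ^ n)) = 0 :=
        (ZMod.natCast_eq_zero_iff _ _).mpr (dvd_Mnum hq n)
      have hx0 : PadicInt.toZModPow n (x q) = 0 := by
        rw [← rep_spec S n x q hq, h0x, Nat.cast_zero]
      rw [hsub q hq, hx0, Nat.cast_sub hM, hM0, Nat.cast_one]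
    rw [hh0]
    simp only [hrx1, h0x, zero_add, Nat.sub_add_cancel hM]
    rw [Finset.sum_range_one, hsum, sub_zero, hgx, h0x]
  · have hrx1 : rep S n (x - 1) = rep S n x - 1 := by
      refine rep_eq_of _ (lt_trans (Nat.sub_lt h0x one_pos) (rep_lt S n x)) fun q hq => ?_
      rw [hsub q hq, ← rep_spec S n x q hq, Nat.cast_sub h0x, Nat.cast_one]
    rw [hh0]
    simp only [hrx1, Nat.sub_add_cancel h0x]
    rw [Finset.sum_range_succ, add_sub_cancel_left]
    exact hgx.symm

lemma sum_eq_zero_of_mu {g : LocallyConstant ZhatProd ℤ_[p]} {S : Finset Nat.Primes} {n : ℕ}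
    (hg : Fac S n g) (hmu : mu p g = 0) :
    ∑ i ∈ range (Mnum S n), g ((i : ℕ) : ZhatProd) = 0 := by
  rw [mu_eq p hg, avg] at hmu
  have hM0 : ((Mnum S n : ℚ_[p]))⁻¹ ≠ 0 :=
    inv_ne_zero (Nat.cast_ne_zero.mpr (Mnum_pos S n).ne')
  have hsum : ∑ i ∈ range (Mnum S n), ((g ((i : ℕ) : ZhatProd) : ℤ_[p]) : ℚ_[p]) = 0 :=
    (mul_eq_zero.mp hmu).resolve_left hM0
  have h2 : ((∑ i ∈ range (Mnum S n), g ((i : ℕ) : ZhatProd) : ℤ_[p]) : ℚ_[p])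
      = ((0 : ℤ_[p]) : ℚ_[p]) := by
    rw [PadicInt.coe_zero]
    exact (map_sum (PadicInt.Coe.ringHom (p := p))
      (fun i : ℕ => g ((i : ℕ) : ZhatProd)) (range (Mnum S n))).trans hsum
  exact Subtype.coe_injective h2

/-! ### surjectivity -/

def ppr : Nat.Primes := ⟨p, Fact.out⟩

lemma fac_indic_aux (k : ℕ) :
    Fac {ppr p} k fun x : ZhatProd =>
      if PadicInt.toZModPow k (x (ppr p)) = 0 then (1 : ℤ_[p]) else 0 := by
  intro x y hxy
  have hx := hxy (ppr p) (Finset.mem_singleton_self _)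
  simp only [hx]

noncomputable def indic (k : ℕ) : LocallyConstant ZhatProd ℤ_[p] :=
  ⟨fun x => if PadicInt.toZModPow k (x (ppr p)) = 0 then 1 else 0,
   fac_isLocallyConstant (fac_indic_aux p k)⟩

lemma fac_indic (k : ℕ) : Fac {ppr p} k (indic p k) := fac_indic_aux p k

lemma mu_indic (k : ℕ) : mu p (indic p k) = (((p ^ k : ℕ)) : ℚ_[p])⁻¹ := by
  rw [mu_eq p (fac_indic p k)]
  have hM : Mnum {ppr p} k = p ^ k := by
    rw [Mnum, Finset.prod_singleton]; rfl
  rw [avg, hM]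
  have hterm : ∀ i ∈ range (p ^ k),
      ((indic p k ((i : ℕ) : ZhatProd) : ℤ_[p]) : ℚ_[p]) = if i = 0 then 1 else 0 := by
    intro i hi
    show (((if PadicInt.toZModPow k ((((i : ℕ) : ZhatProd)) (ppr p)) = 0 then (1 : ℤ_[p])
        else 0) : ℤ_[p]) : ℚ_[p]) = _
    rw [Pi.natCast_apply, map_natCast]
    have hiff : ((i : ℕ) : ZMod (((ppr p : ℕ)) ^ k)) = 0 ↔ i = 0 := by
      rw [ZMod.natCast_eq_zero_iff]
      constructor
      · intro hd
        exact Nat.eq_zero_of_dvd_of_lt hd (Finset.mem_range.mp hi)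
      · rintro rfl; exact dvd_zero _
    simp only [hiff]
    split_ifs <;> simp
  rw [Finset.sum_congr rfl hterm, Finset.sum_ite_eq']
  have h0 : (0 : ℕ) ∈ range (p ^ k) := Finset.mem_range.mpr (pow_pos (Fact.out : p.Prime).pos k)
  rw [if_pos h0, mul_one]

lemma mu_surj : Function.Surjective (mu p) := by
  intro y
  have hp1 : (1 : ℝ) < (p : ℝ) := by exact_mod_cast (Fact.out : p.Prime).one_lt
  obtain ⟨k, hk⟩ := pow_unbounded_of_one_lt (R := ℝ) ‖y‖ hp1
  have hppos : (0 : ℝ) < (p : ℝ) ^ k := pow_pos (lt_trans one_pos hp1) k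
  have hnorm : ‖y * (p : ℚ_[p]) ^ k‖ ≤ 1 := by
    rw [norm_mul, norm_pow, Padic.norm_p, inv_pow]
    calc ‖y‖ * ((p : ℝ) ^ k)⁻¹ ≤ (p : ℝ) ^ k * ((p : ℝ) ^ k)⁻¹ := by
          apply mul_le_mul_of_nonneg_right hk.le (inv_nonneg.mpr hppos.le)
      _ = 1 := mul_inv_cancel₀ hppos.ne'
  let a : ℤ_[p] := ⟨y * (p : ℚ_[p]) ^ k, hnorm⟩
  refine ⟨a • indic p k, ?_⟩
  rw [map_smul, mu_indic]
  show (y * (p : ℚ_[p]) ^ k) * (((p ^ k : ℕ)) : ℚ_[p])⁻¹ = y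
  have hne : ((p : ℚ_[p])) ^ k ≠ 0 :=
    pow_ne_zero k (Nat.cast_ne_zero.mpr (Fact.out : p.Prime).pos.ne')
  push_cast
  field_simp

end CokerDeltaAux

/-- the cokernel of `δ` on `LocallyConstant(Ẑ, ℤ_p)` is isomorphic to `ℚ_p`
as a `ℤ_p`-module. -/
theorem coker_delta_locallyConstant_Zhat_iso_padicRationals (p : ℕ) [Fact p.Prime] :
    Nonempty
      ((LocallyConstant ZhatProd ℤ_[p] ⧸ LinearMap.range (deltaOp p)) ≃ₗ[ℤ_[p]] ℚ_[p]) := by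
  have h1 : LinearMap.range (deltaOp p) = LinearMap.ker (CokerDeltaAux.mu p) := by
    apply le_antisymm
    · rintro _ ⟨g, rfl⟩
      exact LinearMap.mem_ker.mpr (CokerDeltaAux.mu_delta p g)
    · intro g hgker
      obtain ⟨S, n, hg⟩ := CokerDeltaAux.exists_fac g
      obtain ⟨h, hh⟩ := CokerDeltaAux.ker_le p g S n hg
        (CokerDeltaAux.sum_eq_zero_of_mu p hg (LinearMap.mem_ker.mp hgker))
      exact ⟨h, hh⟩
  exact ⟨(Submodule.quotEquivOfEq _ _ h1).trans
    (LinearMap.quotKerEquivOfSurjective _ (CokerDeltaAux.mu_surj p))⟩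
end

section
/- Let L be an infinite field and let r, s be integers with r > s ≥ 0. If a polynomial P ∈ L[X₀, X₁, X₂, X₃] satisfies: for all a, d ∈ Lˣ and all b ∈ L, the algebra substitution X₀ ↦ aX₀ + bX₂, X₁ ↦ aX₁ + bX₃, X₂ ↦ dX₂, X₃ ↦ dX₃ sends P to aʳdˢ · P, then P = 0. -/
open MvPolynomial

set_option maxRecDepth 10000

variable {L : Type} [Field L]

lemma myEvalAeval (x : Fin 4 → L) (f : Fin 4 → MvPolynomial (Fin 4) L)
    (p : MvPolynomial (Fin 4) L) :
    eval x (aeval f p) = eval (fun i => eval x (f i)) p := by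
  induction p using MvPolynomial.induction_on with
  | C a => simp
  | add p q hp hq => rw [map_add, map_add, hp, hq, map_add]
  | mul_X p i hp => rw [map_mul, map_mul, hp, aeval_X, map_mul, eval_X]

lemma myPowEq [Infinite L] {k n : ℕ} (h : ∀ a : Lˣ, (a : L) ^ k = (a : L) ^ n) : k = n := by
  have hp : (Polynomial.X ^ (k+1) - Polynomial.X ^ (n+1) : Polynomial L) = 0 := by
    apply Polynomial.zero_of_eval_zero
    intro x
    rcases eq_or_ne x 0 with rfl | hx
    · simp
    · have := h (Units.mk0 x hx)
      simp only [Units.val_mk0] at this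
      simp [pow_succ, this]
  have := congrArg (fun q => Polynomial.coeff q (k+1)) hp
  simp [Polynomial.coeff_X_pow] at this
  split_ifs at this with h'
  · omega
  · simp at this

lemma myAevalMonomial (f : Fin 4 → MvPolynomial (Fin 4) L) (v : Fin 4 →₀ ℕ) (b : L) :
    aeval f (monomial v b) = C b * (f 0 ^ v 0 * f 1 ^ v 1 * f 2 ^ v 2 * f 3 ^ v 3) := by
  rw [aeval_monomial, Finsupp.prod_pow, Fin.prod_univ_four]
  rfl

lemma myScaleMonomial (c : Fin 4 → L) (v : Fin 4 →₀ ℕ) (b : L) :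
    aeval (fun i => C (c i) * X i) (monomial v b) =
      monomial v ((c 0 ^ v 0 * c 1 ^ v 1 * c 2 ^ v 2 * c 3 ^ v 3) * b) := by
  rw [myAevalMonomial, monomial_eq, Finsupp.prod_pow, Fin.prod_univ_four]
  simp only [mul_pow, ← C_pow, map_mul]
  ring

lemma myCoeffScale (c : Fin 4 → L) (p : MvPolynomial (Fin 4) L) (m : Fin 4 →₀ ℕ) :
    coeff m (aeval (fun i => C (c i) * X i) p) =
      (c 0 ^ m 0 * c 1 ^ m 1 * c 2 ^ m 2 * c 3 ^ m 3) * coeff m p := by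
  conv_lhs => rw [p.as_sum]
  rw [map_sum, coeff_sum]
  simp_rw [myScaleMonomial, coeff_monomial]
  rw [Finset.sum_ite_eq' p.support m]
  by_cases hm : m ∈ p.support
  · simp [hm]
  · simp [hm, notMem_support_iff.mp hm]



/-- The Borel substitution `X₀ ↦ aX₀ + bX₂, X₁ ↦ aX₁ + bX₃, X₂ ↦ dX₂, X₃ ↦ dX₃`. -/
noncomputable def borelSubst {L : Type} [Field L] (a d : Lˣ) (b : L) :
    Fin 4 → MvPolynomial (Fin 4) L :=
  ![C (a : L) * X 0 + C b * X 2,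
    C (a : L) * X 1 + C b * X 3,
    C (d : L) * X 2,
    C (d : L) * X 3]

/-- over an infinite field, if `r > s ≥ 0` then every polynomial
`P ∈ L[X₀,X₁,X₂,X₃]` transforming under the Borel substitution by the character `aʳdˢ`
is zero. -/
theorem semiInvariant_eq_zero_of_gt
    (L : Type) [Field L] [Infinite L] (r s : ℕ) (hrs : s < r)
    (P : MvPolynomial (Fin 4) L)
    (hP : ∀ (a d : Lˣ) (b : L),
      aeval (borelSubst a d b) P = ((a : L) ^ r * (d : L) ^ s) • P) :
    P = 0 := by
  have hscale : ∀ (a d : Lˣ) (m : Fin 4 →₀ ℕ),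
      ((a:L) ^ (m 0) * (a:L) ^ (m 1) * (d:L) ^ (m 2) * (d:L) ^ (m 3)) * coeff m P
        = ((a:L) ^ r * (d:L) ^ s) * coeff m P := by
    intro a d m
    have hb : borelSubst a d 0 = fun i => C (![(a:L), (a:L), (d:L), (d:L)] i) * X i := by
      funext i
      fin_cases i <;> simp [borelSubst]
    have := congrArg (coeff m) (hP a d 0)
    rw [hb, myCoeffScale, coeff_smul, smul_eq_mul] at this
    simpa using this
  have hbideg : ∀ m ∈ P.support, m 0 + m 1 = r ∧ m 2 + m 3 = s := by
    intro m hm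
    have hc : coeff m P ≠ 0 := mem_support_iff.mp hm
    constructor
    · apply myPowEq (L := L)
      intro a
      have := hscale a 1 m
      simp only [Units.val_one, one_pow, mul_one] at this
      rw [← pow_add] at this
      exact mul_right_cancel₀ hc this
    · apply myPowEq (L := L)
      intro d
      have := hscale 1 d m
      simp only [Units.val_one, one_pow, one_mul, mul_one] at this
      rw [← pow_add] at this
      exact mul_right_cancel₀ hc this
  set Det : MvPolynomial (Fin 4) L := X 0 * X 3 - X 1 * X 2 with hDetDef
  have h1 : ∀ x : Fin 4 → L, x 3 ≠ 0 →
      eval x (aeval ![Det, 0, X 2, X 3] P) = x 3 ^ r * eval x P := by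
    intro x hx
    have h2 := congrArg (eval x) (hP (Units.mk0 (x 3) hx) 1 (-(x 1)))
    rw [myEvalAeval, smul_eval] at h2
    rw [myEvalAeval]
    have hpt : (fun i => eval x (borelSubst (Units.mk0 (x 3) hx) 1 (-(x 1)) i))
        = fun i => eval x (![Det, 0, X 2, X 3] i) := by
      funext i
      fin_cases i <;> simp [borelSubst, hDetDef] <;> ring
    rw [hpt] at h2
    rw [h2]
    simp
  have hφ : aeval ![Det, 0, X 2, X 3] P = X 3 ^ r * P := by
    have h2 : X 3 * aeval ![Det, 0, X 2, X 3] P = X 3 * (X 3 ^ r * P) := by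
      apply MvPolynomial.funext
      intro x
      rcases eq_or_ne (x 3) 0 with h0 | h0
      · simp [h0]
      · rw [map_mul, map_mul, h1 x h0, eval_X, map_mul, map_pow, eval_X]
    exact mul_left_cancel₀ (X_ne_zero 3) h2
  have hφ' : aeval ![0, -Det, X 2, X 3] P = X 2 ^ r * P := by
    have h1' : ∀ x : Fin 4 → L, x 2 ≠ 0 →
        eval x (aeval ![0, -Det, X 2, X 3] P) = x 2 ^ r * eval x P := by
      intro x hx
      have h2 := congrArg (eval x) (hP (Units.mk0 (x 2) hx) 1 (-(x 0)))
      rw [myEvalAeval, smul_eval] at h2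
      rw [myEvalAeval]
      have hpt : (fun i => eval x (borelSubst (Units.mk0 (x 2) hx) 1 (-(x 0)) i))
          = fun i => eval x (![0, -Det, X 2, X 3] i) := by
        funext i
        fin_cases i <;> simp [borelSubst, hDetDef] <;> ring
      rw [hpt] at h2
      rw [h2]
      simp
    have h2 : X 2 * aeval ![0, -Det, X 2, X 3] P = X 2 * (X 2 ^ r * P) := by
      apply MvPolynomial.funext
      intro x
      rcases eq_or_ne (x 2) 0 with h0 | h0
      · simp [h0]
      · rw [map_mul, map_mul, h1' x h0, eval_X, map_mul, map_pow, eval_X]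
    exact mul_left_cancel₀ (X_ne_zero 2) h2
  have hstruct : aeval ![Det, 0, X 2, X 3] P = Det ^ r * aeval ![1, 0, X 2, X 3] P := by
    conv_lhs => rw [P.as_sum]
    conv_rhs => rw [P.as_sum]
    rw [map_sum, map_sum, Finset.mul_sum]
    apply Finset.sum_congr rfl
    intro v hv
    rw [myAevalMonomial, myAevalMonomial]
    by_cases hv1 : v 1 = 0
    · have hv0 : v 0 = r := by have := (hbideg v hv).1; omega
      rw [hv1, hv0]
      simp only [Matrix.cons_val_zero, Matrix.cons_val_one, Matrix.cons_val_two,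
        Matrix.cons_val_three, Matrix.head_cons, Matrix.tail_cons, pow_zero, one_pow, mul_one,
        one_mul]
      ring
    · simp [zero_pow hv1]
  have hstruct' : aeval ![0, -Det, X 2, X 3] P
      = ((-1 : MvPolynomial (Fin 4) L)) ^ r * (Det ^ r * aeval ![0, 1, X 2, X 3] P) := by
    conv_lhs => rw [P.as_sum]
    conv_rhs => rw [P.as_sum]
    rw [map_sum, map_sum, Finset.mul_sum, Finset.mul_sum]
    apply Finset.sum_congr rfl
    intro v hv
    rw [myAevalMonomial, myAevalMonomial]
    by_cases hv0 : v 0 = 0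
    · have hv1 : v 1 = r := by have := (hbideg v hv).1; omega
      rw [hv0, hv1]
      simp only [Matrix.cons_val_zero, Matrix.cons_val_one, Matrix.cons_val_two,
        Matrix.cons_val_three, Matrix.head_cons, Matrix.tail_cons, pow_zero, one_pow, mul_one,
        one_mul]
      rw [neg_pow]
      ring
    · simp [zero_pow hv0]
  have hsupp : ∀ n : Fin 4 →₀ ℕ, s < n 3 →
      coeff n (aeval ![(1 : MvPolynomial (Fin 4) L), 0, X 2, X 3] P) = 0 := by
    intro n hgt
    rw [P.as_sum, map_sum, coeff_sum]
    apply Finset.sum_eq_zero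
    intro v hv
    rw [myAevalMonomial]
    by_cases hv1 : v 1 = 0
    · simp only [Matrix.cons_val_zero, Matrix.cons_val_one, Matrix.cons_val_two,
        Matrix.cons_val_three, Matrix.head_cons, Matrix.tail_cons, hv1, pow_zero, one_pow,
        one_mul, mul_one]
      rw [X_pow_eq_monomial, X_pow_eq_monomial, monomial_mul, mul_one, C_mul_monomial, mul_one,
        coeff_monomial]
      rw [if_neg]
      intro h
      have h3 := congrArg (fun f => f 3) h
      simp only [Finsupp.add_apply, Finsupp.single_apply] at h3
      simp at h3
      have := (hbideg v hv).2
      omega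
    · simp [zero_pow hv1]
  have hDet : Det ≠ 0 := by
    intro h
    have := congrArg (eval ![1, 0, 0, 1]) h
    simp [hDetDef] at this
  have e1 : X 3 ^ r * P = Det ^ r * aeval ![1, 0, X 2, X 3] P := by rw [← hφ, hstruct]
  have e2 : X 2 ^ r * P
      = (-1 : MvPolynomial (Fin 4) L) ^ r * (Det ^ r * aeval ![0, 1, X 2, X 3] P) := by
    rw [← hφ', hstruct']
  have e3 : Det ^ r * (X 2 ^ r * aeval ![1, 0, X 2, X 3] P)
      = Det ^ r * ((-1 : MvPolynomial (Fin 4) L) ^ r * (X 3 ^ r * aeval ![0, 1, X 2, X 3] P)) := by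
    calc Det ^ r * (X 2 ^ r * aeval ![1, 0, X 2, X 3] P)
        = X 2 ^ r * (Det ^ r * aeval ![1, 0, X 2, X 3] P) := by ring
      _ = X 2 ^ r * (X 3 ^ r * P) := by rw [← e1]
      _ = X 3 ^ r * (X 2 ^ r * P) := by ring
      _ = X 3 ^ r * ((-1 : MvPolynomial (Fin 4) L) ^ r * (Det ^ r * aeval ![0, 1, X 2, X 3] P)) := by
          rw [e2]
      _ = Det ^ r * ((-1 : MvPolynomial (Fin 4) L) ^ r * (X 3 ^ r * aeval ![0, 1, X 2, X 3] P)) := by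
          ring
  have e4 : X 2 ^ r * aeval ![1, 0, X 2, X 3] P
      = (-1 : MvPolynomial (Fin 4) L) ^ r * (X 3 ^ r * aeval ![0, 1, X 2, X 3] P) :=
    mul_left_cancel₀ (pow_ne_zero r hDet) e3
  have hψ : aeval ![(1 : MvPolynomial (Fin 4) L), 0, X 2, X 3] P = 0 := by
    by_contra hne
    obtain ⟨n, hn⟩ := ne_zero_iff.mp (mul_ne_zero (pow_ne_zero r (X_ne_zero 2)) hne)
    have hle : n 3 ≤ s := by
      by_contra hgt
      push_neg at hgt
      apply hn
      rw [X_pow_eq_monomial, coeff_monomial_mul']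
      split_ifs with h
      · rw [one_mul]
        apply hsupp
        rwa [Finsupp.tsub_apply, Finsupp.single_apply,
          if_neg (show (2 : Fin 4) ≠ 3 by decide), tsub_zero]
      · rfl
    have hge : r ≤ n 3 := by
      rw [e4] at hn
      have hc : ((-1 : MvPolynomial (Fin 4) L)) ^ r = C ((-1 : L) ^ r) := by
        rw [map_pow, map_neg, map_one]
      rw [hc, coeff_C_mul] at hn
      have hn' : coeff n (X 3 ^ r * aeval ![(0 : MvPolynomial (Fin 4) L), 1, X 2, X 3] P) ≠ 0 := by
        intro h0
        rw [h0, mul_zero] at hn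
        exact hn rfl
      rw [X_pow_eq_monomial, coeff_monomial_mul'] at hn'
      split_ifs at hn' with h
      · exact Finsupp.single_le_iff.mp h
      · exact absurd rfl hn'
    omega
  have hz : X 3 ^ r * P = 0 := by rw [e1, hψ, mul_zero]
  exact (mul_eq_zero.mp hz).resolve_left (pow_ne_zero r (X_ne_zero 3))
end

section
/- The image of SL₂(ℤ) under the diagonal embedding into the profinite group ∏_ℓ SL₂(ℤ_ℓ) (product over all primes ℓ, with the product topology) is dense. -/
/-- The topology on `SL₂` over a topological ring, induced from the space of matrices. -/
instance (R : Type*) [CommRing R] [TopologicalSpace R] :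
    TopologicalSpace (Matrix.SpecialLinearGroup (Fin 2) R) :=
  inferInstanceAs (TopologicalSpace { A : Matrix (Fin 2) (Fin 2) R // A.det = 1 })

open Matrix

namespace SL2Approx

variable {R : Type*} [CommRing R]

/-- Elementary upper-triangular matrix in `SL₂`. -/
def E12 (x : R) : Matrix.SpecialLinearGroup (Fin 2) R :=
  ⟨!![1, x; 0, 1], by simp [Matrix.det_fin_two_of]⟩

/-- Elementary lower-triangular matrix in `SL₂`. -/
def E21 (x : R) : Matrix.SpecialLinearGroup (Fin 2) R :=
  ⟨!![1, 0; x, 1], by simp [Matrix.det_fin_two_of]⟩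

lemma E21_mul_E21 (x y : R) : E21 x * E21 y = E21 (x + y) := by
  apply Subtype.ext
  show (!![1, 0; x, 1] : Matrix (Fin 2) (Fin 2) R) * !![1, 0; y, 1] = !![1, 0; x + y, 1]
  rw [Matrix.mul_fin_two]
  norm_num [add_comm]

lemma E21_zero : (E21 (0 : R)) = 1 := by
  apply Subtype.ext
  show (!![1, 0; 0, 1] : Matrix (Fin 2) (Fin 2) R) = 1
  simp [← Matrix.one_fin_two]

lemma decomp_of_isUnit {A : Matrix.SpecialLinearGroup (Fin 2) R}
    (h : IsUnit ((A : Matrix (Fin 2) (Fin 2) R) 1 0)) :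
    ∃ x y z : R, A = E12 x * E21 y * E12 z := by
  obtain ⟨v, hv⟩ := h.exists_right_inv
  set a := (A : Matrix (Fin 2) (Fin 2) R) 0 0 with ha
  set b := (A : Matrix (Fin 2) (Fin 2) R) 0 1 with hb
  set c := (A : Matrix (Fin 2) (Fin 2) R) 1 0 with hc
  set d := (A : Matrix (Fin 2) (Fin 2) R) 1 1 with hd
  have hdet : a * d - b * c = 1 := by
    have := A.2
    rwa [Matrix.det_fin_two] at this
  refine ⟨(a - 1) * v, c, b + ((1 - a) * v) * d, Subtype.ext ?_⟩
  show (A : Matrix (Fin 2) (Fin 2) R)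
      = !![1, (a - 1) * v; 0, 1] * !![1, 0; c, 1] * !![1, b + ((1 - a) * v) * d; 0, 1]
  rw [Matrix.mul_fin_two, Matrix.mul_fin_two]
  ext i j
  fin_cases i <;> fin_cases j <;> simp [← ha, ← hb, ← hc, ← hd] <;>
    first
      | ring1
      | linear_combination (1 - a) * hv
      | linear_combination (v * d * (a - 1) ^ 2) * hv + ((a - 1) * v) * hdet
      | linear_combination (d * (a - 1)) * hv + hdet

/-- Decomposition of `SL₂` over a "local-like" ring into elementary matrices. -/
lemma decomp (hR : ∀ u w : R, IsUnit (u + w) → IsUnit u ∨ IsUnit w)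
    (A : Matrix.SpecialLinearGroup (Fin 2) R) :
    ∃ s x y z : R, A = E21 s * E12 x * E21 y * E12 z := by
  set a := (A : Matrix (Fin 2) (Fin 2) R) 0 0 with ha
  set b := (A : Matrix (Fin 2) (Fin 2) R) 0 1 with hb
  set c := (A : Matrix (Fin 2) (Fin 2) R) 1 0 with hc
  set d := (A : Matrix (Fin 2) (Fin 2) R) 1 1 with hd
  have hdet : a * d - b * c = 1 := by
    have := A.2
    rwa [Matrix.det_fin_two] at this
  by_cases hcu : IsUnit c
  · obtain ⟨x, y, z, hxyz⟩ := decomp_of_isUnit hcu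
    exact ⟨0, x, y, z, by rw [hxyz, E21_zero, one_mul, mul_assoc]⟩
  · -- then `a` is a unit
    have hau : IsUnit a := by
      have h1 : IsUnit (a * d + (-(b * c))) := by
        rw [← sub_eq_add_neg, hdet]; exact isUnit_one
      rcases hR _ _ h1 with h2 | h2
      · exact isUnit_of_mul_isUnit_left h2
      · have h3 := h2.neg
        rw [neg_neg] at h3
        exact absurd (isUnit_of_mul_isUnit_right h3) hcu
    have hacu : IsUnit (a + c) := by
      have h1 : IsUnit ((a + c) + (-c)) := by simpa using hau
      rcases hR _ _ h1 with h2 | h2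
      · exact h2
      · exact absurd h2.neg (by simpa using hcu)
    have hBc : ((E21 (1 : R) * A : Matrix.SpecialLinearGroup (Fin 2) R)
        : Matrix (Fin 2) (Fin 2) R) 1 0 = a + c := by
      show ((!![1, 0; 1, 1] : Matrix (Fin 2) (Fin 2) R) * A) 1 0 = a + c
      rw [Matrix.mul_apply, Fin.sum_univ_two]
      simp [← ha, ← hc, add_comm]
    obtain ⟨x, y, z, hxyz⟩ := decomp_of_isUnit (A := E21 (1 : R) * A) (hBc ▸ hacu)
    refine ⟨-1, x, y, z, ?_⟩
    have : E21 (-1 : R) * (E21 (1 : R) * A) = A := by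
      rw [← mul_assoc, E21_mul_E21]
      norm_num [E21_zero]
    rw [← this, hxyz]
    group

lemma map_E12 {S : Type*} [CommRing S] (f : R →+* S) (x : R) :
    Matrix.SpecialLinearGroup.map f (E12 x) = E12 (f x) := by
  apply Subtype.ext
  show f.mapMatrix (!![1, x; 0, 1] : Matrix (Fin 2) (Fin 2) R) = !![1, f x; 0, 1]
  ext i j
  fin_cases i <;> fin_cases j <;> simp

lemma map_E21 {S : Type*} [CommRing S] (f : R →+* S) (x : R) :
    Matrix.SpecialLinearGroup.map f (E21 x) = E21 (f x) := by
  apply Subtype.ext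
  show f.mapMatrix (!![1, 0; x, 1] : Matrix (Fin 2) (Fin 2) R) = !![1, 0; f x, 1]
  ext i j
  fin_cases i <;> fin_cases j <;> simp

/-- In `ZMod (p ^ k)` with `p` prime and `k ≥ 1`, a sum of two nonunits is a nonunit. -/
lemma zmod_pow_prime_local {p k : ℕ} (hp : p.Prime) (hk : 0 < k) :
    ∀ u w : ZMod (p ^ k), IsUnit (u + w) → IsUnit u ∨ IsUnit w := by
  haveI : NeZero (p ^ k) := ⟨pow_ne_zero _ hp.ne_zero⟩
  have key : ∀ u : ZMod (p ^ k), ¬ IsUnit u → p ∣ u.val := by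
    intro u hu
    by_contra hdvd
    apply hu
    have h2 : IsUnit ((u.val : ℕ) : ZMod (p ^ k)) := by
      rw [ZMod.isUnit_iff_coprime]
      exact Nat.Coprime.pow_right _ ((Nat.coprime_comm).mp (hp.coprime_iff_not_dvd.mpr hdvd))
    rwa [ZMod.natCast_val, ZMod.cast_id] at h2
  intro u w huw
  by_contra hcon
  push_neg at hcon
  obtain ⟨hu, hw⟩ := hcon
  have hdvd : p ∣ (u + w).val := by
    rw [ZMod.val_add]
    rw [Nat.dvd_mod_iff (dvd_pow_self p hk.ne')]
    exact Nat.dvd_add (key u hu) (key w hw)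
  have hcop : Nat.Coprime (u + w).val (p ^ k) := by
    rw [← ZMod.isUnit_iff_coprime, ZMod.natCast_val, ZMod.cast_id]
    exact huw
  have this := hcop
  have h1 := Nat.dvd_gcd hdvd (dvd_pow_self p hk.ne')
  rw [Nat.Coprime] at this
  rw [this] at h1
  exact hp.ne_one (Nat.dvd_one.mp h1)

/-- Integer CRT: simultaneous congruences for pairwise coprime moduli. -/
lemma int_crt {ι : Type*} [Fintype ι] (a : ι → ℕ) (hcop : Pairwise (Function.onFun Nat.Coprime a))
    (s : ∀ i, ZMod (a i)) : ∃ S : ℤ, ∀ i, (S : ZMod (a i)) = s i := by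
  obtain ⟨m, hm⟩ := (ZMod.prodEquivPi a hcop).surjective s
  obtain ⟨S, rfl⟩ := ZMod.intCast_surjective (n := ∏ i, a i) m
  refine ⟨S, fun i => ?_⟩
  have h1 : ((Pi.evalRingHom (fun i => ZMod (a i)) i).comp
      (((ZMod.prodEquivPi a hcop : ZMod (∏ i, a i) ≃+* ∀ i, ZMod (a i)) :
        ZMod (∏ i, a i) →+* ∀ i, ZMod (a i)).comp
        (Int.castRingHom (ZMod (∏ i, a i))))) S = s i := by
    simp only [RingHom.comp_apply, RingHom.coe_coe, Pi.evalRingHom_apply,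
      Int.coe_castRingHom, hm]
  rw [← h1, eq_intCast]

open Topology in
/-- Congruence neighborhoods form a basis of neighborhoods in `SL₂(ℤ_p)`. -/
lemma nhds_congruence (p : ℕ) [Fact p.Prime] (x : Matrix.SpecialLinearGroup (Fin 2) ℤ_[p])
    {u : Set (Matrix.SpecialLinearGroup (Fin 2) ℤ_[p])} (hu : u ∈ 𝓝 x) :
    ∃ k : ℕ, 0 < k ∧ ∀ y : Matrix.SpecialLinearGroup (Fin 2) ℤ_[p],
      (∀ i j, PadicInt.toZModPow k ((y : Matrix (Fin 2) (Fin 2) ℤ_[p]) i j)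
        = PadicInt.toZModPow k ((x : Matrix (Fin 2) (Fin 2) ℤ_[p]) i j)) → y ∈ u := by
  have hΦ : Topology.IsInducing (fun y : Matrix.SpecialLinearGroup (Fin 2) ℤ_[p] =>
      (fun i j => (y : Matrix (Fin 2) (Fin 2) ℤ_[p]) i j : Fin 2 → Fin 2 → ℤ_[p])) := ⟨rfl⟩
  rw [hΦ.nhds_eq_comap] at hu
  obtain ⟨W, hW, hWu⟩ := Filter.mem_comap.mp hu
  obtain ⟨ε, hε, hball⟩ := Metric.mem_nhds_iff.mp hW
  obtain ⟨k, hk⟩ := PadicInt.exists_pow_neg_lt p hε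
  refine ⟨k + 1, Nat.succ_pos k, fun y hy => ?_⟩
  refine hWu (hball ?_)
  rw [Metric.mem_ball, dist_pi_lt_iff hε]
  intro i
  rw [dist_pi_lt_iff hε]
  intro j
  have hker : (y : Matrix (Fin 2) (Fin 2) ℤ_[p]) i j - (x : Matrix (Fin 2) (Fin 2) ℤ_[p]) i j
      ∈ RingHom.ker (PadicInt.toZModPow (p := p) (k + 1)) := by
    rw [RingHom.mem_ker, map_sub, hy i j, sub_self]
  rw [PadicInt.ker_toZModPow] at hker
  have hle := (PadicInt.norm_le_pow_iff_mem_span_pow _ (k + 1)).mpr hker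
  have hone : (1 : ℝ) ≤ (p : ℝ) := by
    exact_mod_cast (Fact.out : p.Prime).one_lt.le
  calc dist ((y : Matrix (Fin 2) (Fin 2) ℤ_[p]) i j) ((x : Matrix (Fin 2) (Fin 2) ℤ_[p]) i j)
      = ‖(y : Matrix (Fin 2) (Fin 2) ℤ_[p]) i j - (x : Matrix (Fin 2) (Fin 2) ℤ_[p]) i j‖ :=
        dist_eq_norm _ _
    _ ≤ (p : ℝ) ^ (-((k + 1 : ℕ) : ℤ)) := hle
    _ ≤ (p : ℝ) ^ (-(k : ℤ)) := by
        apply zpow_le_zpow_right₀ hone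
        omega
    _ < ε := hk

end SL2Approx

open SL2Approx in
/-- strong approximation: the image of `SL₂(ℤ)` under the diagonal embedding
into `∏_ℓ SL₂(ℤ_ℓ)` is dense. -/
theorem denseRange_SL2Z_in_prod_SL2_padicInt :
    DenseRange (fun γ : Matrix.SpecialLinearGroup (Fin 2) ℤ =>
      fun q : Nat.Primes =>
        Matrix.SpecialLinearGroup.map (Int.castRingHom ℤ_[(q : ℕ)]) γ) := by
  intro x
  rw [mem_closure_iff_nhds]
  intro U hU
  rw [nhds_pi] at hU
  obtain ⟨I, hIfin, t, ht, hsub⟩ := Filter.mem_pi.mp hU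
  haveI := hIfin.fintype
  choose k hkpos hk using fun q : I =>
    SL2Approx.nhds_congruence ((q : Nat.Primes) : ℕ) (x q) (ht q)
  have hcop : Pairwise (Function.onFun Nat.Coprime fun q : I => ((q : Nat.Primes) : ℕ) ^ (k q)) := by
    intro q q' hne
    have h1 : ((q : Nat.Primes) : ℕ) ≠ ((q' : Nat.Primes) : ℕ) := by
      intro h
      exact hne (Subtype.ext (Subtype.ext h))
    exact Nat.Coprime.pow _ _ ((Nat.coprime_primes (q : Nat.Primes).2 (q' : Nat.Primes).2).mpr h1)
  choose s xx yy zz hdec using fun q : I =>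
    SL2Approx.decomp (SL2Approx.zmod_pow_prime_local (q : Nat.Primes).2 (hkpos q))
      (Matrix.SpecialLinearGroup.map (PadicInt.toZModPow (k q)) (x q))
  obtain ⟨S, hS⟩ := SL2Approx.int_crt _ hcop s
  obtain ⟨X, hX⟩ := SL2Approx.int_crt _ hcop xx
  obtain ⟨Y, hY⟩ := SL2Approx.int_crt _ hcop yy
  obtain ⟨Z, hZ⟩ := SL2Approx.int_crt _ hcop zz
  set γ : Matrix.SpecialLinearGroup (Fin 2) ℤ := E21 S * E12 X * E21 Y * E12 Z with hγ
  refine ⟨_, hsub ?_, Set.mem_range_self γ⟩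
  intro q hq
  apply hk ⟨q, hq⟩
  intro i j
  have hgroup : Matrix.SpecialLinearGroup.map
        (Int.castRingHom (ZMod (((q : ℕ)) ^ (k ⟨q, hq⟩)))) γ
      = Matrix.SpecialLinearGroup.map (PadicInt.toZModPow (k ⟨q, hq⟩)) (x q) := by
    rw [hdec ⟨q, hq⟩, hγ]
    rw [_root_.map_mul, _root_.map_mul, _root_.map_mul, SL2Approx.map_E21, SL2Approx.map_E12,
      SL2Approx.map_E21, SL2Approx.map_E12]
    rw [show (Int.castRingHom (ZMod (((q : ℕ)) ^ (k ⟨q, hq⟩)))) S = ((S : ZMod _)) from rfl,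
      show (Int.castRingHom (ZMod (((q : ℕ)) ^ (k ⟨q, hq⟩)))) X = ((X : ZMod _)) from rfl,
      show (Int.castRingHom (ZMod (((q : ℕ)) ^ (k ⟨q, hq⟩)))) Y = ((Y : ZMod _)) from rfl,
      show (Int.castRingHom (ZMod (((q : ℕ)) ^ (k ⟨q, hq⟩)))) Z = ((Z : ZMod _)) from rfl]
    rw [hS ⟨q, hq⟩, hX ⟨q, hq⟩, hY ⟨q, hq⟩, hZ ⟨q, hq⟩]
  have hentry := congrArg
    (fun B : Matrix.SpecialLinearGroup (Fin 2) (ZMod (((q : ℕ)) ^ (k ⟨q, hq⟩))) =>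
      (B : Matrix (Fin 2) (Fin 2) (ZMod (((q : ℕ)) ^ (k ⟨q, hq⟩)))) i j) hgroup
  simp only [Matrix.SpecialLinearGroup.map_apply_coe, RingHom.mapMatrix_apply,
    Matrix.map_apply, eq_intCast] at hentry
  show PadicInt.toZModPow (k ⟨q, hq⟩)
      ((Matrix.SpecialLinearGroup.map (Int.castRingHom ℤ_[(q : ℕ)]) γ
        : Matrix (Fin 2) (Fin 2) ℤ_[(q : ℕ)]) i j)
    = PadicInt.toZModPow (k ⟨q, hq⟩) ((x q : Matrix (Fin 2) (Fin 2) ℤ_[(q : ℕ)]) i j)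
  simp only [Matrix.SpecialLinearGroup.map_apply_coe, RingHom.mapMatrix_apply,
    Matrix.map_apply, eq_intCast, map_intCast]
  exact hentry
end
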